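/- arXiv:1208.5083 — 4 statements merged into one kernel-verified Lean document; each statement's English description precedes it below -/
import Mathlib

section
/- For every state s and all policies π and π' of a deterministic MDP with nonuniform discounts, (r^π)^T x^{π',s} = v^{π'}_s − v^π_s. -/
open Finset

/-- A deterministic Markov decision process: each action `a` is usable in the
single state `src a`, gives reward `r a`, and moves deterministically to `tgt a`.
Every state has at least one usable action. -/
structure DetMDP (S A : Type) where
  src : A → S
  tgt : A → S
  r : A → ℝ
  exists_action : ∀ s : S, ∃ a : A, src a = s

namespace DetMDP

variable {S A : Type} [Fintype S] [Fintype A] [DecidableEq S] [DecidableEq A]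
variable (M : DetMDP S A)

/-- `π : S → A` is a policy if it assigns to each state an action usable there. -/
def IsPolicy (π : S → A) : Prop := ∀ s : S, M.src (π s) = s

/-- The next-state map of a policy. -/
def step (π : S → A) (s : S) : S := M.tgt (π s)

/-- `v` is the value vector of policy `π` with nonuniform discounts `γ : A → ℝ`:
the unique solution of `v = r_π + (G^π)ᵀ v`, stated pointwise. -/
def IsValue (γ : A → ℝ) (π : S → A) (v : S → ℝ) : Prop :=
  ∀ s : S, v s = M.r (π s) + γ (π s) * v (M.tgt (π s))

/-- The gain (reduced cost) of action `a` with respect to a value vector `v`. -/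
def gain (γ : A → ℝ) (v : S → ℝ) (a : A) : ℝ :=
  M.r a + γ a * v (M.tgt a) - v (M.src a)

/-- `x` is the single-source flux vector `x^{π,s0}` of policy `π` for the source
state `s0`: it vanishes off the policy and satisfies the flux equations of the
single-source primal LP. -/
def IsFluxFrom (γ : A → ℝ) (π : S → A) (s0 : S) (x : A → ℝ) : Prop :=
  (∀ a : A, a ≠ π (M.src a) → x a = 0) ∧
  ∀ s : S, (∑ a ∈ univ.filter fun a => M.src a = s, x a)
      = (if s = s0 then 1 else 0) +
        ∑ a ∈ univ.filter fun a => M.tgt a = s, γ a * x a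

/-- `C` is (the action set of) a cycle of the policy `π`. -/
def IsCycleOf (π : S → A) (C : Finset A) : Prop :=
  ∃ s : S, (∃ k ∈ Finset.Icc 1 (Fintype.card S), (M.step π)^[k] s = s) ∧
    C = (Finset.range (Fintype.card S)).image fun i => π ((M.step π)^[i] s)

/-- One pivot of the simplex method with the highest-gain rule: switch to the
action of (strictly positive) maximal gain. -/
def SimplexPivot (γ : A → ℝ) (π π' : S → A) : Prop :=
  ∃ (v : S → ℝ) (a : A), M.IsValue γ π v ∧ 0 < M.gain γ v a ∧
    (∀ b : A, M.gain γ v b ≤ M.gain γ v a) ∧ π' = Function.update π (M.src a) a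

/-- A policy is terminal if all gains are nonpositive. -/
def IsTerminal (γ : A → ℝ) (π : S → A) : Prop :=
  ∃ v : S → ℝ, M.IsValue γ π v ∧ ∀ a : A, M.gain γ v a ≤ 0

/-- An execution of the simplex method with the highest-gain pivoting rule:
at every time step either a pivot occurs, or the current policy is terminal
(and the sequence stays constant). -/
def IsExecution (γ : A → ℝ) (seq : ℕ → S → A) : Prop :=
  (∀ t : ℕ, M.IsPolicy (seq t)) ∧
  ∀ t : ℕ, M.SimplexPivot γ (seq t) (seq (t + 1)) ∨
    (M.IsTerminal γ (seq t) ∧ seq (t + 1) = seq t)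

/-- Iteration `t` of the execution creates a new cycle. -/
def NewCycleAt (seq : ℕ → S → A) (t : ℕ) : Prop :=
  ∃ C : Finset A, M.IsCycleOf (seq (t + 1)) C ∧ ¬ M.IsCycleOf (seq t) C

/-- State `s` lies on a cycle of `π` whose discount is dominated by `γ_a`. -/
def OnDomCycle (γ : A → ℝ) (π : S → A) (s : S) (a : A) : Prop :=
  ∃ C : Finset A, M.IsCycleOf π C ∧ π s ∈ C ∧ a ∈ C ∧ ∀ b ∈ C, γ a ≤ γ b

end DetMDP

/-- For every state `s` and policies `π, π'` of a deterministic
MDP with nonuniform discounts, `(r^π)ᵀ x^{π',s} = v^{π'}_s − v^π_s`. -/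
theorem single_source_gain_identity
    {S A : Type} [Fintype S] [Fintype A] [DecidableEq S] [DecidableEq A]
    (M : DetMDP S A) (γ : A → ℝ) (hγ : ∀ a : A, 0 ≤ γ a ∧ γ a < 1)
    (s : S) (π π' : S → A) (hπ : M.IsPolicy π) (hπ' : M.IsPolicy π')
    (v v' : S → ℝ) (hv : M.IsValue γ π v) (hv' : M.IsValue γ π' v')
    (x' : A → ℝ) (hx' : M.IsFluxFrom γ π' s x') :
    ∑ a : A, M.gain γ v a * x' a = v' s - v s := by
  classical
  obtain ⟨hsupp, hflux⟩ := hx'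
  have key : ∀ w : S → ℝ, ∑ a, (w (M.src a) - γ a * w (M.tgt a)) * x' a = w s := by
    intro w
    have h1 : ∑ a, w (M.src a) * x' a
        = ∑ s' : S, w s' * ∑ a ∈ univ.filter (fun a => M.src a = s'), x' a := by
      rw [← Finset.sum_fiberwise univ M.src (fun a => w (M.src a) * x' a)]
      refine Finset.sum_congr rfl fun s' _ => ?_
      rw [Finset.mul_sum]
      refine Finset.sum_congr rfl fun a ha => ?_
      rw [(Finset.mem_filter.mp ha).2]
    have h2 : ∑ a, w (M.tgt a) * (γ a * x' a)
        = ∑ s' : S, w s' * ∑ a ∈ univ.filter (fun a => M.tgt a = s'), γ a * x' a := by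
      rw [← Finset.sum_fiberwise univ M.tgt (fun a => w (M.tgt a) * (γ a * x' a))]
      refine Finset.sum_congr rfl fun s' _ => ?_
      rw [Finset.mul_sum]
      refine Finset.sum_congr rfl fun a ha => ?_
      rw [(Finset.mem_filter.mp ha).2]
    have hsplit : ∑ a, (w (M.src a) - γ a * w (M.tgt a)) * x' a
        = ∑ a, w (M.src a) * x' a - ∑ a, w (M.tgt a) * (γ a * x' a) := by
      rw [← Finset.sum_sub_distrib]
      exact Finset.sum_congr rfl fun a _ => by ring
    rw [hsplit, h1, h2, ← Finset.sum_sub_distrib]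
    have hterm : ∀ s' : S,
        w s' * (∑ a ∈ univ.filter (fun a => M.src a = s'), x' a)
          - w s' * (∑ a ∈ univ.filter (fun a => M.tgt a = s'), γ a * x' a)
        = if s' = s then w s' else 0 := by
      intro s'
      rw [hflux s']
      by_cases h : s' = s <;> simp [h] <;> ring
    rw [Finset.sum_congr rfl fun s' _ => hterm s']
    simp
  have hgain : ∀ (u : S → ℝ), ∑ a, M.gain γ u a * x' a
      = ∑ a, M.r a * x' a - u s := by
    intro u
    have : ∀ a, M.gain γ u a * x' a
        = M.r a * x' a - (u (M.src a) - γ a * u (M.tgt a)) * x' a := by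
      intro a; unfold DetMDP.gain; ring
    rw [Finset.sum_congr rfl fun a _ => this a, Finset.sum_sub_distrib, key u]
  have hzero : ∑ a, M.gain γ v' a * x' a = 0 := by
    refine Finset.sum_eq_zero fun a _ => ?_
    by_cases hxa : x' a = 0
    · rw [hxa, mul_zero]
    · have ha : a = π' (M.src a) := by
        by_contra h; exact hxa (hsupp a h)
      have hva := hv' (M.src a)
      rw [← ha] at hva
      unfold DetMDP.gain
      rw [hva]
      ring
  have hr : ∑ a, M.r a * x' a = v' s := by
    have := hgain v'
    rw [hzero] at this
    linarith
  rw [hgain v, hr]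
end

section
/- Let π be a policy of a deterministic MDP with nonuniform discounts containing a cycle C whose discount is dominated by γ_a for some action a ∈ C, let γ_C = ∏_{a'∈C} γ_{a'}, let s be a state on C, let a' = π(s) be the action used at s, and let a'' be an arbitrary action of C. Then: (i) x^{π,s}_{a'} = 1/(1−γ_C); (ii) γ_C/(1−γ_C) ≤ x^{π,s}_{a''} ≤ 1/(1−γ_C); and (iii) 1/(n(1−γ_a)) ≤ 1/(1−γ_C) ≤ 1/(1−γ_a). -/
open Finset

private lemma iterMod {α : Type} (g : α → α) (y : α) (k : ℕ) (hk : 0 < k)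
    (h : g^[k] y = y) : ∀ j : ℕ, g^[j] y = g^[j % k] y := by
  intro j
  induction j using Nat.strong_induction_on with
  | _ j ih =>
    by_cases hj : j < k
    · rw [Nat.mod_eq_of_lt hj]
    · push_neg at hj
      have h1 : j = (j - k) + k := by omega
      rw [h1, Function.iterate_add_apply, h, ih (j - k) (by omega), Nat.add_mod_right]

section Aux

open Function

private lemma natMod_helper {m i j : ℕ} (hm : 0 < m) (hj : j < m)
    (h : (i + 1) % m = (j + 1) % m) : i % m = j := by
  have h' : i % m = j % m := Nat.ModEq.add_right_cancel' 1 h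
  rw [h', Nat.mod_eq_of_lt hj]

/-- If `f` solves the homogeneous flux equations off the forward orbit of `s`,
with contraction coefficients `c < 1`, then `f` vanishes off the orbit. -/
private lemma vanish_off_orbit {S : Type} [Fintype S] [DecidableEq S]
    (g : S → S) (c : S → ℝ) (hc : ∀ s', 0 ≤ c s' ∧ c s' < 1) (s : S) (f : S → ℝ)
    (heq : ∀ s', (∀ i : ℕ, g^[i] s ≠ s') →
      f s' = ∑ s'' ∈ Finset.univ.filter fun s'' => g s'' = s', c s'' * f s'') :
    ∀ s', (∀ i : ℕ, g^[i] s ≠ s') → f s' = 0 := by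
  classical
  set U : Finset S := Finset.univ.filter fun s' => ∀ i : ℕ, g^[i] s ≠ s' with hU
  have hUmem : ∀ {s'}, s' ∈ U ↔ ∀ i : ℕ, g^[i] s ≠ s' := by
    intro s'; simp [hU]
  -- W : states whose image lies in U
  set W : Finset S := Finset.univ.filter fun s'' => g s'' ∈ U with hW
  have hWU : W ⊆ U := by
    intro b hb
    rw [hW, Finset.mem_filter] at hb
    rw [hUmem]
    intro i hib
    have : g^[i+1] s = g b := by rw [Function.iterate_succ_apply', hib]
    exact (hUmem.mp hb.2) (i + 1) this
  have key : ∑ s' ∈ U, |f s'| ≤ ∑ s'' ∈ U, c s'' * |f s''| := by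
    have step1 : ∑ s' ∈ U, |f s'| ≤
        ∑ s' ∈ U, ∑ s'' ∈ Finset.univ.filter (fun s'' => g s'' = s'), c s'' * |f s''| := by
      apply Finset.sum_le_sum
      intro s' hs'
      rw [heq s' (hUmem.mp hs')]
      refine le_trans (Finset.abs_sum_le_sum_abs _ _) (le_of_eq ?_)
      apply Finset.sum_congr rfl
      intro b _
      rw [abs_mul, abs_of_nonneg (hc b).1]
    have step2 : ∑ s' ∈ U, ∑ s'' ∈ Finset.univ.filter (fun s'' => g s'' = s'),
        c s'' * |f s''| = ∑ s'' ∈ W, c s'' * |f s''| := by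
      rw [← Finset.sum_fiberwise_of_maps_to (s := W) (t := U) (g := g)
        (fun b hb => (Finset.mem_filter.mp hb).2) (fun s'' => c s'' * |f s''|)]
      apply Finset.sum_congr rfl
      intro s' hs'
      apply Finset.sum_congr _ (fun _ _ => rfl)
      ext b
      simp only [hW, Finset.mem_filter, Finset.mem_univ, true_and]
      constructor
      · intro h2
        refine ⟨?_, h2⟩
        rw [h2]; exact hs'
      · intro h2
        exact h2.2
    have step3 : ∑ s'' ∈ W, c s'' * |f s''| ≤ ∑ s'' ∈ U, c s'' * |f s''| := by
      apply Finset.sum_le_sum_of_subset_of_nonneg hWU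
      intro b _ _
      exact mul_nonneg (hc b).1 (abs_nonneg _)
    linarith
  intro s' hs'
  by_contra hne
  have hsU : s' ∈ U := hUmem.mpr hs'
  have hlt : ∑ s'' ∈ U, c s'' * |f s''| < ∑ s'' ∈ U, |f s''| := by
    apply Finset.sum_lt_sum
    · intro b _
      exact mul_le_of_le_one_left (abs_nonneg _) (hc b).2.le
    · refine ⟨s', hsU, ?_⟩
      have : c s' * |f s'| < 1 * |f s'| :=
        mul_lt_mul_of_pos_right (hc s').2 (abs_pos.mpr hne)
      linarith
  linarith

/-- Pointwise form of the flux equations, eliminating off-policy actions. -/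
private lemma flux_pointwise {S A : Type} [Fintype S] [Fintype A]
    [DecidableEq S] [DecidableEq A]
    (M : DetMDP S A) (γ : A → ℝ) (π : S → A) (hπ : M.IsPolicy π) (s : S)
    (x : A → ℝ) (hx : M.IsFluxFrom γ π s x) (s' : S) :
    x (π s') = (if s' = s then 1 else 0) +
      ∑ s'' ∈ Finset.univ.filter fun s'' => M.step π s'' = s',
        γ (π s'') * x (π s'') := by
  classical
  have hinj : Function.Injective π := fun s1 s2 h => by
    rw [← hπ s1, ← hπ s2, h]
  have h := hx.2 s'
  have hL : (∑ a ∈ Finset.univ.filter fun a => M.src a = s', x a) = x (π s') := by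
    apply Finset.sum_eq_single_of_mem
    · simp [hπ s']
    · intro b hb hne
      rw [Finset.mem_filter] at hb
      exact hx.1 b (by rw [hb.2]; exact hne)
  have hR : (∑ a ∈ Finset.univ.filter fun a => M.tgt a = s', γ a * x a)
      = ∑ s'' ∈ Finset.univ.filter fun s'' => M.step π s'' = s',
          γ (π s'') * x (π s'') := by
    have himg : ∑ b ∈ (Finset.univ.filter fun s'' => M.step π s'' = s').image π,
        γ b * x b = ∑ s'' ∈ Finset.univ.filter fun s'' => M.step π s'' = s',
          γ (π s'') * x (π s'') :=
      Finset.sum_image (fun y _ z _ hyz => hinj hyz)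
    rw [← himg]
    symm
    apply Finset.sum_subset
    · intro b hb
      rw [Finset.mem_image] at hb
      obtain ⟨s'', hs'', rfl⟩ := hb
      rw [Finset.mem_filter] at hs'' ⊢
      exact ⟨Finset.mem_univ _, hs''.2⟩
    · intro b hb hnb
      rw [Finset.mem_filter] at hb
      have : x b = 0 := by
        apply hx.1
        intro hcon
        apply hnb
        rw [Finset.mem_image]
        refine ⟨M.src b, ?_, hcon.symm⟩
        rw [Finset.mem_filter]
        refine ⟨Finset.mem_univ _, ?_⟩
        show M.tgt (π (M.src b)) = s'
        rw [← hcon]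
        exact hb.2
      rw [this, mul_zero]
  rw [hL, hR] at h
  exact h

end Aux

/-- Flux bounds on a cycle `C` of `π` dominated by `γ_a`:
for a state `s` on `C` with action `a' = π s` and any `a'' ∈ C`,
(i) `x^{π,s}_{a'} = 1/(1−γ_C)`; (ii) `γ_C/(1−γ_C) ≤ x^{π,s}_{a''} ≤ 1/(1−γ_C)`;
(iii) `1/(n(1−γ_a)) ≤ 1/(1−γ_C) ≤ 1/(1−γ_a)`. -/
theorem cycle_flux_bounds_nonuniform
    {S A : Type} [Fintype S] [Fintype A] [DecidableEq S] [DecidableEq A]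
    (M : DetMDP S A) (γ : A → ℝ) (hγ : ∀ a : A, 0 ≤ γ a ∧ γ a < 1)
    (π : S → A) (hπ : M.IsPolicy π)
    (C : Finset A) (hC : M.IsCycleOf π C)
    (a : A) (ha : a ∈ C) (hdom : ∀ a' ∈ C, γ a ≤ γ a')
    (s : S) (hs : π s ∈ C)
    (x : A → ℝ) (hx : M.IsFluxFrom γ π s x)
    (a'' : A) (ha'' : a'' ∈ C) :
    x (π s) = 1 / (1 - ∏ b ∈ C, γ b) ∧
    ((∏ b ∈ C, γ b) / (1 - ∏ b ∈ C, γ b) ≤ x a'' ∧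
      x a'' ≤ 1 / (1 - ∏ b ∈ C, γ b)) ∧
    (1 / ((Fintype.card S : ℝ) * (1 - γ a)) ≤ 1 / (1 - ∏ b ∈ C, γ b) ∧
      1 / (1 - ∏ b ∈ C, γ b) ≤ 1 / (1 - γ a)) := by
  classical
  obtain ⟨s0, ⟨k, hkIcc, hks0⟩, hCeq⟩ := hC
  rw [Finset.mem_Icc] at hkIcc
  obtain ⟨hk1, hkn⟩ := hkIcc
  set n := Fintype.card S with hn
  set g := M.step π with hgdef
  have hk0 : 0 < k := hk1
  have hinj : Function.Injective π := fun s1 s2 h => by rw [← hπ s1, ← hπ s2, h]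
  -- s lies on the orbit of s0
  have hsC : π s ∈ (Finset.range n).image fun i => π (g^[i] s0) := by
    rw [← hCeq]; exact hs
  rw [Finset.mem_image] at hsC
  obtain ⟨i0, hi0, hi0eq⟩ := hsC
  have hseq : g^[i0] s0 = s := hinj hi0eq
  -- s is periodic with period k, take its minimal period m
  have hpers : g^[k] s = s := by
    rw [← hseq, ← Function.iterate_add_apply, Nat.add_comm,
      Function.iterate_add_apply, hks0]
  set m := Function.minimalPeriod g s with hm
  have hmpos : 0 < m := Function.IsPeriodicPt.minimalPeriod_pos hk0 hpers
  have hmk : m ≤ k := Function.IsPeriodicPt.minimalPeriod_le hk0 hpers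
  have hmfix : g^[m] s = s := Function.iterate_minimalPeriod
  have hiterinj : ∀ i < m, ∀ j < m, g^[i] s = g^[j] s → i = j := fun i hi j hj h =>
    Function.iterate_injOn_Iio_minimalPeriod (Set.mem_Iio.mpr hi) (Set.mem_Iio.mpr hj) h
  -- returning to s0
  have hs0back : g^[k - i0 % k] s = s0 := by
    rw [← hseq, ← Function.iterate_add_apply]
    rw [iterMod g s0 k hk0 hks0 (k - i0 % k + i0)]
    have hmod0 : (k - i0 % k + i0) % k = 0 := by
      have h1 : (k - i0 % k + i0 % k) % k = (k - i0 % k + i0) % k :=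
        Nat.ModEq.add_left _ (Nat.mod_modEq i0 k)
      rw [← h1, show k - i0 % k + i0 % k = k from by
        have := Nat.mod_lt i0 hk0; omega, Nat.mod_self]
    rw [hmod0, Function.iterate_zero_apply]
  -- the orbit of s0 equals the orbit of s
  set V : Finset S := (Finset.range m).image (fun j => g^[j] s) with hV
  have horb : (Finset.range n).image (fun i => g^[i] s0) = V := by
    apply Finset.Subset.antisymm
    · intro s' hs'
      rw [Finset.mem_image] at hs'
      obtain ⟨i, hi, rfl⟩ := hs'
      rw [hV, Finset.mem_image]
      refine ⟨(i + (k - i0 % k)) % m, Finset.mem_range.mpr (Nat.mod_lt _ hmpos), ?_⟩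
      rw [← iterMod g s m hmpos hmfix (i + (k - i0 % k)),
        Function.iterate_add_apply, hs0back]
    · intro s' hs'
      rw [hV, Finset.mem_image] at hs'
      obtain ⟨j, hj, rfl⟩ := hs'
      rw [Finset.mem_image]
      refine ⟨(j + i0) % k, Finset.mem_range.mpr (lt_of_lt_of_le (Nat.mod_lt _ hk0) hkn), ?_⟩
      rw [← iterMod g s0 k hk0 hks0 (j + i0), Function.iterate_add_apply, hseq]
  have hCV : C = V.image π := by
    rw [hCeq, ← horb, Finset.image_image]
    rfl
  -- the cycle product
  set P : ℕ → ℝ := fun j => ∏ i ∈ Finset.range j, γ (π (g^[i] s)) with hP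
  have hprod : ∏ b ∈ C, γ b = P m := by
    rw [hCV, Finset.prod_image (fun y _ z _ hyz => hinj hyz), hV,
      Finset.prod_image (fun i hi j hj hij =>
        hiterinj i (Finset.mem_range.mp hi) j (Finset.mem_range.mp hj) hij)]
  -- flux equations
  have heq := flux_pointwise M γ π hπ s x hx
  simp only [← hgdef] at heq
  have hγπ : ∀ s' : S, 0 ≤ γ (π s') ∧ γ (π s') < 1 := fun s' => hγ (π s')
  have hvanish : ∀ s', (∀ i : ℕ, g^[i] s ≠ s') → x (π s') = 0 := by
    apply vanish_off_orbit g (fun s' => γ (π s')) hγπ s (fun s' => x (π s'))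
    intro s' hs'
    have h0 := heq s'
    rw [if_neg (fun hcon => hs' 0 (by
      rw [Function.iterate_zero_apply]; exact hcon.symm)), zero_add] at h0
    exact h0
  -- unique predecessor on the cycle
  have hpred : ∀ j, j < m → (∑ s'' ∈ Finset.univ.filter fun s'' => g s'' = g^[j+1] s,
      γ (π s'') * x (π s'')) = γ (π (g^[j] s)) * x (π (g^[j] s)) := by
    intro j hj
    apply Finset.sum_eq_single_of_mem
    · rw [Finset.mem_filter]
      exact ⟨Finset.mem_univ _, (Function.iterate_succ_apply' g j s).symm⟩
    · intro b hb hne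
      rw [Finset.mem_filter] at hb
      have hb0 : x (π b) = 0 := by
        apply hvanish
        intro i hib
        apply hne
        have hstep : g^[i+1] s = g^[j+1] s := by
          rw [Function.iterate_succ_apply', hib, hb.2]
        have hmod : (i+1) % m = (j+1) % m := by
          apply hiterinj _ (Nat.mod_lt _ hmpos) _ (Nat.mod_lt _ hmpos)
          rw [← iterMod g s m hmpos hmfix (i+1), ← iterMod g s m hmpos hmfix (j+1)]
          exact hstep
        have him : i % m = j := natMod_helper hmpos hj hmod
        rw [← hib, iterMod g s m hmpos hmfix i, him]
      rw [hb0, mul_zero]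
  -- the recurrence along the cycle
  have hrec : ∀ j, j < m → x (π (g^[j] s)) = P j * x (π s) := by
    intro j
    induction j with
    | zero => intro _; simp [hP]
    | succ j ih =>
      intro hj
      have hj' : j < m := by omega
      have hne : g^[j+1] s ≠ s := by
        intro hcon
        have : j + 1 = 0 := hiterinj (j+1) hj 0 hmpos (by
          rw [Function.iterate_zero_apply]; exact hcon)
        omega
      have h0 := heq (g^[j+1] s)
      rw [if_neg hne, zero_add, hpred j hj', ih hj'] at h0
      rw [h0, hP]
      simp only
      rw [Finset.prod_range_succ]
      ring
  -- closing the cycle at s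
  have hclose : x (π s) = 1 + P m * x (π s) := by
    have h0 := heq s
    rw [if_pos rfl] at h0
    have hpredm := hpred (m - 1) (by omega)
    rw [show m - 1 + 1 = m from by omega, hmfix] at hpredm
    rw [hpredm, hrec (m-1) (by omega)] at h0
    have hPm : P m = P (m-1) * γ (π (g^[m-1] s)) := by
      simp only [hP]
      conv_lhs => rw [show m = (m-1)+1 from by omega]
      rw [Finset.prod_range_succ]
    linear_combination h0 - x (π s) * hPm
  -- basic facts on the cycle product
  have hγC0 : (0:ℝ) ≤ ∏ b ∈ C, γ b := Finset.prod_nonneg (fun b _ => (hγ b).1)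
  have hγCa : ∏ b ∈ C, γ b ≤ γ a := by
    rw [← Finset.mul_prod_erase C γ ha]
    have h1 : ∏ b ∈ C.erase a, γ b ≤ 1 :=
      Finset.prod_le_one (fun b _ => (hγ b).1) (fun b _ => (hγ b).2.le)
    have h2 : (0:ℝ) ≤ ∏ b ∈ C.erase a, γ b :=
      Finset.prod_nonneg (fun b _ => (hγ b).1)
    nlinarith [(hγ a).1]
  have hγC1 : ∏ b ∈ C, γ b < 1 := lt_of_le_of_lt hγCa (hγ a).2
  have hden : (0:ℝ) < 1 - ∏ b ∈ C, γ b := by linarith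
  have hxs : x (π s) = 1 / (1 - ∏ b ∈ C, γ b) := by
    rw [eq_div_iff hden.ne']
    rw [← hprod] at hclose
    linear_combination hclose
  -- locate a'' on the cycle
  obtain ⟨s'', hs''V, ha''eq⟩ : ∃ s'' ∈ V, π s'' = a'' := by
    rw [hCV, Finset.mem_image] at ha''
    exact ha''
  rw [hV, Finset.mem_image] at hs''V
  obtain ⟨j, hjm, rfl⟩ := hs''V
  rw [Finset.mem_range] at hjm
  have hxj : x a'' = P j * x (π s) := by rw [← ha''eq]; exact hrec j hjm
  have hPj1 : P j ≤ 1 :=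
    Finset.prod_le_one (fun i _ => (hγ _).1) (fun i _ => (hγ _).2.le)
  have hPmj : ∏ b ∈ C, γ b ≤ P j := by
    rw [hprod]
    simp only [hP]
    rw [← Finset.prod_range_mul_prod_Ico (fun i => γ (π (g^[i] s))) (le_of_lt hjm)]
    have h1 : ∏ i ∈ Finset.Ico j m, γ (π (g^[i] s)) ≤ 1 :=
      Finset.prod_le_one (fun i _ => (hγ _).1) (fun i _ => (hγ _).2.le)
    have h2 : (0:ℝ) ≤ ∏ i ∈ Finset.range j, γ (π (g^[i] s)) :=
      Finset.prod_nonneg (fun i _ => (hγ _).1)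
    exact mul_le_of_le_one_right h2 h1
  have hga : (0:ℝ) < 1 - γ a := by linarith [(hγ a).2]
  refine ⟨hxs, ⟨?_, ?_⟩, ?_, ?_⟩
  · -- lower bound for x a''
    rw [hxj, hxs, div_eq_mul_one_div]
    exact mul_le_mul_of_nonneg_right hPmj (by positivity)
  · -- upper bound for x a''
    rw [hxj, hxs]
    calc P j * (1 / (1 - ∏ b ∈ C, γ b)) ≤ 1 * (1 / (1 - ∏ b ∈ C, γ b)) :=
      mul_le_mul_of_nonneg_right hPj1 (by positivity)
    _ = 1 / (1 - ∏ b ∈ C, γ b) := one_mul _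
  · -- left inequality of (iii)
    have hcard : (C.card : ℝ) ≤ (n : ℝ) := by
      have h1 : C.card ≤ n := by
        calc C.card ≤ (Finset.range n).card := by
              rw [hCeq]; exact Finset.card_image_le
        _ = n := Finset.card_range n
      exact_mod_cast h1
    have hapow : γ a ^ C.card ≤ ∏ b ∈ C, γ b := by
      refine le_trans (le_of_eq (Finset.prod_const (γ a)).symm)
        (Finset.prod_le_prod (fun b _ => (hγ a).1) (fun b hb => hdom b hb))
    have hgeom : 1 - γ a ^ C.card =
        (∑ i ∈ Finset.range C.card, γ a ^ i) * (1 - γ a) := by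
      have hgm := geom_sum_mul (γ a) C.card
      linear_combination hgm
    have hsumle : (∑ i ∈ Finset.range C.card, γ a ^ i) ≤ (C.card : ℝ) := by
      calc (∑ i ∈ Finset.range C.card, γ a ^ i)
          ≤ ∑ _i ∈ Finset.range C.card, (1:ℝ) :=
            Finset.sum_le_sum (fun i _ => pow_le_one₀ (hγ a).1 (hγ a).2.le)
      _ = (C.card : ℝ) := by simp
    have hkey : 1 - ∏ b ∈ C, γ b ≤ (n:ℝ) * (1 - γ a) := by
      have h4 : (∑ i ∈ Finset.range C.card, γ a ^ i) * (1 - γ a)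
          ≤ (C.card : ℝ) * (1 - γ a) :=
        mul_le_mul_of_nonneg_right hsumle hga.le
      have h5 : (C.card:ℝ) * (1 - γ a) ≤ (n:ℝ) * (1 - γ a) :=
        mul_le_mul_of_nonneg_right hcard hga.le
      linarith
    exact one_div_le_one_div_of_le hden hkey
  · -- right inequality of (iii)
    exact one_div_le_one_div_of_le hga (by linarith)
end

section
/- In any execution of the simplex method with the highest-gain pivoting rule on a deterministic MDP with nonuniform discounts, starting from any policy in the execution, within O(n² m log n) iterations either the execution terminates or some iteration creates a new cycle. -/
open Finset

namespace DetMDP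

variable {S A : Type} [Fintype S] [Fintype A] [DecidableEq S] [DecidableEq A]
variable {M : DetMDP S A}
set_option linter.unusedSectionVars false
set_option linter.unusedVariables false



lemma gain_policy_eq_zero {γ : A → ℝ} {π : S → A} {v : S → ℝ}
    (hπ : M.IsPolicy π) (hv : M.IsValue γ π v) (s : S) :
    M.gain γ v (π s) = 0 := by
  unfold gain
  rw [hπ s, ← hv s]; ring

/-- Telescoping identity along the orbit of `π`. -/
lemma telescope {γ : A → ℝ} {π : S → A} {w : S → ℝ}
    (hπ : M.IsPolicy π) (hw : M.IsValue γ π w) (v : S → ℝ) (s : S) :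
    ∀ N : ℕ, w s - v s =
      (∑ i ∈ range N, (∏ j ∈ range i, γ (π ((M.step π)^[j] s))) *
          M.gain γ v (π ((M.step π)^[i] s)))
        + (∏ j ∈ range N, γ (π ((M.step π)^[j] s))) *
            (w ((M.step π)^[N] s) - v ((M.step π)^[N] s)) := by
  intro N
  induction N with
  | zero => simp
  | succ N ih =>
    rw [Finset.sum_range_succ, Finset.prod_range_succ]
    set z := (M.step π)^[N] s with hz
    have hstep : (M.step π)^[N+1] s = M.step π z := Function.iterate_succ_apply' _ _ _
    have hgain : M.gain γ v (π z) =
        w z - v z - γ (π z) * (w (M.step π z) - v (M.step π z)) := by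
      unfold gain
      rw [hπ z]
      have := hw z
      unfold DetMDP.step
      unfold DetMDP.step at this
      rw [this]; ring
    rw [hstep, ih, hgain]; ring

/-- mod-periodicity of iterates -/
lemma iterate_mod {f : S → S} {z : S} {k : ℕ} (hk : f^[k] z = z) (i : ℕ) :
    f^[i] z = f^[i % k] z := by
  conv_lhs => rw [← Nat.div_add_mod i k]
  rw [Nat.add_comm, Function.iterate_add_apply, Function.iterate_mul,
    Function.iterate_fixed hk]

/-- after `card S` steps the orbit is on a cycle -/
lemma exists_period (f : S → S) (s : S) :
    ∃ k ∈ Finset.Icc 1 (Fintype.card S), f^[k] (f^[Fintype.card S] s) = f^[Fintype.card S] s := by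
  set n := Fintype.card S with hn
  have hni : ¬ Function.Injective (fun i : Fin (n+1) => f^[(i:ℕ)] s) := by
    intro hinj
    have := Fintype.card_le_of_injective _ hinj
    simp [n] at this
  rw [Function.not_injective_iff] at hni
  obtain ⟨i, j, hij, hne⟩ := hni
  clear_value n
  have hpq : ∃ p q : ℕ, f^[p] s = f^[q] s ∧ q < p ∧ p ≤ n := by
    rcases Nat.lt_or_ge (j:ℕ) (i:ℕ) with h | h
    · exact ⟨i, j, hij, h, by omega⟩
    · have hlt : (i:ℕ) < (j:ℕ) := by
        rcases Nat.lt_or_ge (i:ℕ) (j:ℕ) with h' | h'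
        · exact h'
        · exact absurd (Fin.ext (by omega)) hne
      exact ⟨j, i, hij.symm, hlt, by omega⟩
  clear hij hne
  obtain ⟨p, q, hij, hlt, hpn⟩ := hpq
  refine ⟨p - q, ?_, ?_⟩
  · simp only [Finset.mem_Icc]; omega
  · have h1 : p - q + q = p := by omega
    have h2 : f^[p-q] (f^[q] s) = f^[q] s := by
      rw [← Function.iterate_add_apply, h1, hij]
    obtain ⟨d, hd⟩ : ∃ d, n = d + q := ⟨n - q, by omega⟩
    have e1 : f^[n] s = f^[d] (f^[q] s) := by
      rw [hd, Function.iterate_add_apply]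
    rw [e1, ← Function.iterate_add_apply, Nat.add_comm, Function.iterate_add_apply, h2]


section Orbits

variable (f : S → S)

lemma iterate_mem_orbit {z : S} {k : ℕ} (hk1 : 1 ≤ k) (hkn : k ≤ Fintype.card S)
    (hkz : f^[k] z = z) (i : ℕ) :
    f^[i] z ∈ (Finset.range (Fintype.card S)).image fun j => f^[j] z := by
  rw [iterate_mod hkz i]
  exact Finset.mem_image_of_mem _ (Finset.mem_range.2 (lt_of_lt_of_le (Nat.mod_lt _ hk1) hkn))

lemma orbit_eq_of_mem {z w : S} {k : ℕ} (hk1 : 1 ≤ k) (hkn : k ≤ Fintype.card S)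
    (hkz : f^[k] z = z) (hw : ∃ i, w = f^[i] z) :
    ((Finset.range (Fintype.card S)).image fun j => f^[j] w)
      = ((Finset.range (Fintype.card S)).image fun j => f^[j] z) := by
  obtain ⟨i, hi⟩ := hw
  have hi0 : w = f^[i % k] z := by rw [hi, iterate_mod hkz]
  set i₀ := i % k with hi₀def
  have hi₀k : i₀ < k := Nat.mod_lt _ hk1
  have hwp : f^[k] w = w := by
    rw [hi0, ← Function.iterate_add_apply, Nat.add_comm, Function.iterate_add_apply, hkz]
  apply Finset.Subset.antisymm
  · intro x hx
    obtain ⟨j, _, hj⟩ := Finset.mem_image.1 hx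
    have : x = f^[j + i₀] z := by rw [← hj, hi0, ← Function.iterate_add_apply]
    rw [this]
    exact iterate_mem_orbit f hk1 hkn hkz _
  · intro x hx
    obtain ⟨j, _, hj⟩ := Finset.mem_image.1 hx
    have key : f^[(k - i₀ + j % k)] w = x := by
      rw [hi0, ← Function.iterate_add_apply]
      have e : k - i₀ + j % k + i₀ = j % k + k := by omega
      rw [e, Function.iterate_add_apply, hkz, ← iterate_mod hkz, hj]
    have : x = f^[(k - i₀ + j % k) % k] w := by
      rw [← iterate_mod hwp, key]
    rw [this]
    exact Finset.mem_image_of_mem _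
      (Finset.mem_range.2 (lt_of_lt_of_le (Nat.mod_lt _ hk1) hkn))

end Orbits

section Cycles

variable {γ : A → ℝ}

/-- every action of a cycle of `π` is the `π`-action at its own source -/
lemma cycle_action {π : S → A} (hπ : M.IsPolicy π) {C : Finset A}
    (hC : M.IsCycleOf π C) : ∀ c ∈ C, π (M.src c) = c := by
  obtain ⟨z, _, rfl⟩ := hC
  intro c hc
  obtain ⟨i, _, rfl⟩ := Finset.mem_image.1 hc
  rw [hπ]

lemma cycle_src_mem {π : S → A} (hπ : M.IsPolicy π) {C : Finset A} {c : A}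
    (hC : M.IsCycleOf π C) (hc : c ∈ C) :
    ∃ i, M.src c = (M.step π)^[i] (hC.choose) := by
  obtain ⟨i, _, rfl⟩ := Finset.mem_image.1 (by rw [hC.choose_spec.2] at hc; exact hc)
  exact ⟨i, by rw [hπ]⟩

/-- a cycle equals the orbit image from any of its source states -/
lemma cycle_eq_orbit_image {π : S → A} (hπ : M.IsPolicy π) {C : Finset A} {w : S}
    (hC : M.IsCycleOf π C) (hw : ∃ c ∈ C, M.src c = w) :
    C = (Finset.range (Fintype.card S)).image fun i => π ((M.step π)^[i] w) := by
  obtain ⟨z, ⟨k, hk, hkz⟩, hCdef⟩ := hC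
  obtain ⟨c, hc, hcw⟩ := hw
  rw [Finset.mem_Icc] at hk
  have himg : ∀ y : S, ((Finset.range (Fintype.card S)).image fun i => π ((M.step π)^[i] y))
      = ((Finset.range (Fintype.card S)).image fun i => (M.step π)^[i] y).image π := by
    intro y; rw [Finset.image_image]; rfl
  have hwz : ∃ i, w = (M.step π)^[i] z := by
    rw [hCdef] at hc
    obtain ⟨i, _, rfl⟩ := Finset.mem_image.1 hc
    exact ⟨i, by rw [← hcw, hπ]⟩
  rw [hCdef, himg, himg, orbit_eq_of_mem _ hk.1 hk.2 hkz hwz]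

/-- two policies agree at sources of a common cycle -/
lemma policy_eq_on_cycle {π π' : S → A} (hπ : M.IsPolicy π) (hπ' : M.IsPolicy π')
    {C : Finset A} (hC : M.IsCycleOf π C) (hC' : M.IsCycleOf π' C)
    {c : A} (hc : c ∈ C) : π (M.src c) = π' (M.src c) := by
  rw [cycle_action hπ hC c hc, cycle_action hπ' hC' c hc]

end Cycles


section ValueCycle

variable {γ : A → ℝ}

/-- values at a cycle state agree for any two policies both containing the cycle -/
lemma value_eq_at_cycle_witness (hγ : ∀ a, 0 ≤ γ a ∧ γ a < 1)
    {π π' : S → A} (hπ : M.IsPolicy π) (hπ' : M.IsPolicy π')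
    {v v' : S → ℝ} (hv : M.IsValue γ π v) (hv' : M.IsValue γ π' v')
    {z : S} {k : ℕ} (hk1 : 1 ≤ k) (hkn : k ≤ Fintype.card S)
    (hkz : (M.step π)^[k] z = z)
    (hC' : M.IsCycleOf π'
      ((Finset.range (Fintype.card S)).image fun i => π ((M.step π)^[i] z))) :
    v z = v' z := by
  set f := M.step π with hf
  set C := (Finset.range (Fintype.card S)).image fun i => π (f^[i] z) with hCdef
  have hagree : ∀ i, π' (f^[i] z) = π (f^[i] z) := by
    intro i
    have hc : π (f^[i] z) ∈ C := by
      rw [hCdef, iterate_mod hkz i]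
      exact Finset.mem_image_of_mem _
        (Finset.mem_range.2 (lt_of_lt_of_le (Nat.mod_lt _ hk1) hkn))
    have := cycle_action hπ' hC' _ hc
    rwa [hπ (f^[i] z)] at this
  have hd : ∀ i, v (f^[i] z) - v' (f^[i] z)
      = γ (π (f^[i] z)) * (v (f^[i+1] z) - v' (f^[i+1] z)) := by
    intro i
    have hsucc : f^[i+1] z = M.tgt (π (f^[i] z)) := by
      rw [Function.iterate_succ_apply']; rfl
    have h1 := hv (f^[i] z)
    have h2 := hv' (f^[i] z)
    rw [hagree i] at h2
    rw [h1, h2, hsucc]; ring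
  have hiter : ∀ N, v z - v' z
      = (∏ j ∈ Finset.range N, γ (π (f^[j] z))) * (v (f^[N] z) - v' (f^[N] z)) := by
    intro N
    induction N with
    | zero => simp
    | succ N ih => rw [Finset.prod_range_succ, ih, hd N]; ring
  have hk' := hiter k
  rw [hkz] at hk'
  set P := ∏ j ∈ Finset.range k, γ (π (f^[j] z)) with hP
  have hP1 : P < 1 := by
    obtain ⟨k', rfl⟩ : ∃ k', k = k' + 1 := ⟨k - 1, by omega⟩
    rw [hP, Finset.prod_range_succ']
    have h0 : γ (π (f^[0] z)) < 1 := (hγ _).2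
    have h0' : 0 ≤ γ (π (f^[0] z)) := (hγ _).1
    have hrest : (∏ i ∈ Finset.range k', γ (π (f^[i+1] z))) ≤ 1 :=
      Finset.prod_le_one (fun i _ => (hγ _).1) (fun i _ => le_of_lt (hγ _).2)
    have hrest' : 0 ≤ ∏ i ∈ Finset.range k', γ (π (f^[i+1] z)) :=
      Finset.prod_nonneg (fun i _ => (hγ _).1)
    calc (∏ i ∈ Finset.range k', γ (π (f^[i+1] z))) * γ (π (f^[0] z))
        ≤ 1 * γ (π (f^[0] z)) := by
          exact mul_le_mul_of_nonneg_right hrest h0'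
      _ < 1 := by rw [one_mul]; exact h0
  have hzero : (1 - P) * (v z - v' z) = 0 := by linarith [hk']
  rcases mul_eq_zero.1 hzero with h | h
  · linarith
  · linarith

end ValueCycle


section Improve

variable {γ : A → ℝ}

/-- policy-improvement inequality: if all gains of `π'` w.r.t. the value of `π`
are nonnegative, the value of `π'` dominates, improved by the local gain. -/
lemma improve_ge (hγ : ∀ a, 0 ≤ γ a ∧ γ a < 1)
    {π π' : S → A} (hπ : M.IsPolicy π) (hπ' : M.IsPolicy π')
    {v v' : S → ℝ} (hv : M.IsValue γ π v) (hv' : M.IsValue γ π' v')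
    (hpos : ∀ s : S, 0 ≤ M.gain γ v (π' s)) (s : S) :
    v s + M.gain γ v (π' s) ≤ v' s := by
  have hA : Nonempty A := ⟨π s⟩
  obtain ⟨a₀, -, hΓ⟩ := Finset.exists_max_image (Finset.univ : Finset A) γ
    ⟨Classical.arbitrary A, Finset.mem_univ _⟩
  set Γ := γ a₀ with hΓdef
  have hΓ0 : 0 ≤ Γ := (hγ _).1
  have hΓ1 : Γ < 1 := (hγ _).2
  have hΓa : ∀ a : A, γ a ≤ Γ := fun a => hΓ a (Finset.mem_univ a)
  obtain ⟨x₀, -, hx₀⟩ := Finset.exists_max_image (Finset.univ : Finset S)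
    (fun x => |v' x - v x|) ⟨s, Finset.mem_univ _⟩
  set c₀ := |v' x₀ - v x₀| with hc₀def
  have hc₀ : 0 ≤ c₀ := abs_nonneg _
  have hc₀a : ∀ x : S, |v' x - v x| ≤ c₀ := fun x => hx₀ x (Finset.mem_univ x)
  have key : ∀ N : ℕ, v s + M.gain γ v (π' s) - v' s ≤ Γ ^ (N+1) * c₀ := by
    intro N
    have htel := telescope hπ' hv' v s (N+1)
    set W : ℕ → ℝ := fun i => ∏ j ∈ Finset.range i, γ (π' ((M.step π')^[j] s)) with hW
    have hW0 : ∀ i, 0 ≤ W i := fun i => Finset.prod_nonneg (fun j _ => (hγ _).1)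
    have hWΓ : ∀ i, W i ≤ Γ ^ i := by
      intro i
      rw [hW]
      calc (∏ j ∈ Finset.range i, γ (π' ((M.step π')^[j] s)))
          ≤ ∏ j ∈ Finset.range i, Γ :=
            Finset.prod_le_prod (fun j _ => (hγ _).1) (fun j _ => hΓa _)
        _ = Γ ^ i := by rw [Finset.prod_const, Finset.card_range]
    have hsum : M.gain γ v (π' s)
        ≤ ∑ i ∈ Finset.range (N+1), W i * M.gain γ v (π' ((M.step π')^[i] s)) := by
      have h0 : W 0 * M.gain γ v (π' ((M.step π')^[0] s)) = M.gain γ v (π' s) := by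
        simp [hW]
      rw [← h0]
      exact Finset.single_le_sum
        (f := fun i => W i * M.gain γ v (π' ((M.step π')^[i] s)))
        (fun i _ => mul_nonneg (hW0 i) (hpos _))
        (Finset.mem_range.2 (Nat.succ_pos N))
    have htail : -(Γ ^ (N+1) * c₀)
        ≤ W (N+1) * (v' ((M.step π')^[N+1] s) - v ((M.step π')^[N+1] s)) := by
      have h1 : |W (N+1) * (v' ((M.step π')^[N+1] s) - v ((M.step π')^[N+1] s))|
          ≤ Γ ^ (N+1) * c₀ := by
        rw [abs_mul, abs_of_nonneg (hW0 _)]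
        exact mul_le_mul (hWΓ _) (hc₀a _) (abs_nonneg _) (pow_nonneg hΓ0 _)
      linarith [neg_abs_le (W (N+1) * (v' ((M.step π')^[N+1] s) - v ((M.step π')^[N+1] s))), h1]
    rw [hW] at hsum htail
    linarith [htel, hsum, htail]
  have hlim : Filter.Tendsto (fun N : ℕ => Γ ^ (N+1) * c₀) Filter.atTop (nhds 0) := by
    have h1 : Filter.Tendsto (fun N : ℕ => Γ ^ N) Filter.atTop (nhds 0) :=
      tendsto_pow_atTop_nhds_zero_of_lt_one hΓ0 hΓ1
    have h2 : Filter.Tendsto (fun N : ℕ => Γ ^ (N+1)) Filter.atTop (nhds 0) :=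
      h1.comp (Filter.tendsto_add_atTop_nat 1)
    simpa using h2.mul_const c₀
  have := ge_of_tendsto' hlim key
  linarith

end Improve


section GapBound

variable {γ : A → ℝ}

/-- if all cycles of `πT` are cycles of `π`, the value gap is at most `n` times
the maximal gain -/
lemma gap_le (hγ : ∀ a, 0 ≤ γ a ∧ γ a < 1)
    {π πT : S → A} (hπ : M.IsPolicy π) (hπT : M.IsPolicy πT)
    {v vT : S → ℝ} (hv : M.IsValue γ π v) (hvT : M.IsValue γ πT vT)
    (hnest : ∀ C, M.IsCycleOf πT C → M.IsCycleOf π C)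
    {G : ℝ} (hG0 : 0 ≤ G) (hGa : ∀ a, M.gain γ v a ≤ G) (s : S) :
    vT s - v s ≤ (Fintype.card S : ℝ) * G := by
  set n := Fintype.card S with hn
  have htel := telescope hπT hvT v s n
  obtain ⟨k, hk, hkz⟩ := exists_period (M.step πT) s
  rw [Finset.mem_Icc] at hk
  set z := (M.step πT)^[n] s with hz
  have hC : M.IsCycleOf πT
      ((Finset.range n).image fun i => πT ((M.step πT)^[i] z)) :=
    ⟨z, ⟨k, Finset.mem_Icc.2 hk, hkz⟩, rfl⟩
  have hC' := hnest _ hC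
  have hvz : vT z = v z :=
    value_eq_at_cycle_witness hγ hπT hπ hvT hv hk.1 hk.2 hkz hC'
  have htail : vT ((M.step πT)^[n] s) - v ((M.step πT)^[n] s) = 0 := by
    rw [← hz, hvz]; ring
  have hterm : ∀ i ∈ Finset.range n,
      (∏ j ∈ Finset.range i, γ (πT ((M.step πT)^[j] s))) *
        M.gain γ v (πT ((M.step πT)^[i] s)) ≤ G := by
    intro i _
    set W := ∏ j ∈ Finset.range i, γ (πT ((M.step πT)^[j] s)) with hW
    have hW0 : 0 ≤ W := Finset.prod_nonneg (fun j _ => (hγ _).1)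
    have hW1 : W ≤ 1 := Finset.prod_le_one (fun j _ => (hγ _).1)
      (fun j _ => le_of_lt (hγ _).2)
    rcases le_or_gt 0 (M.gain γ v (πT ((M.step πT)^[i] s))) with h | h
    · calc W * M.gain γ v (πT ((M.step πT)^[i] s))
          ≤ 1 * M.gain γ v (πT ((M.step πT)^[i] s)) := mul_le_mul_of_nonneg_right hW1 h
        _ ≤ G := by rw [one_mul]; exact hGa _
    · calc W * M.gain γ v (πT ((M.step πT)^[i] s))
          ≤ 0 := mul_nonpos_of_nonneg_of_nonpos hW0 (le_of_lt h)
        _ ≤ G := hG0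
  have hsum : (∑ i ∈ Finset.range n, (∏ j ∈ Finset.range i, γ (πT ((M.step πT)^[j] s))) *
      M.gain γ v (πT ((M.step πT)^[i] s))) ≤ (n : ℝ) * G := by
    calc _ ≤ ∑ i ∈ Finset.range n, G := Finset.sum_le_sum hterm
      _ = (n : ℝ) * G := by rw [Finset.sum_const, Finset.card_range, nsmul_eq_mul]
  rw [htail, mul_zero, add_zero] at htel
  rw [htel]
  exact hsum

end GapBound


section CaseSplit

variable {γ : A → ℝ}

/-- at any state with positive gap, either some current action has very negative
gain w.r.t. the reference value, or a cycle state carries half the gap. -/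
lemma case_split (hγ : ∀ a, 0 ≤ γ a ∧ γ a < 1)
    {π : S → A} (hπ : M.IsPolicy π)
    {v vT : S → ℝ} (hv : M.IsValue γ π v)
    {s : S} (hx : 0 < vT s - v s) :
    (∃ b : A, π (M.src b) = b ∧ M.gain γ vT b ≤ -((vT s - v s)/(2*(Fintype.card S : ℝ))))
    ∨ (∃ (z : S) (k : ℕ), k ∈ Finset.Icc 1 (Fintype.card S) ∧ (M.step π)^[k] z = z ∧
        (vT s - v s)/2 ≤ vT z - v z) := by
  set n := Fintype.card S with hn
  have hn1 : 1 ≤ n := Fintype.card_pos_iff.2 ⟨s⟩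
  have hnR : (0:ℝ) < n := by exact_mod_cast hn1
  have htel := telescope hπ hv vT s n
  set z := (M.step π)^[n] s with hz
  set W : ℕ → ℝ := fun i => ∏ j ∈ Finset.range i, γ (π ((M.step π)^[j] s)) with hW
  have hW0 : ∀ i, 0 ≤ W i := fun i => Finset.prod_nonneg (fun j _ => (hγ _).1)
  have hW1 : ∀ i, W i ≤ 1 := fun i => Finset.prod_le_one (fun j _ => (hγ _).1)
    (fun j _ => le_of_lt (hγ _).2)
  by_cases hcase : ∃ i ∈ Finset.range n,
      (vT s - v s)/(2*(n:ℝ)) ≤ W i * (- M.gain γ vT (π ((M.step π)^[i] s)))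
  · obtain ⟨i, _, hi⟩ := hcase
    left
    refine ⟨π ((M.step π)^[i] s), by rw [hπ], ?_⟩
    set g := M.gain γ vT (π ((M.step π)^[i] s)) with hg
    have hxn : 0 < (vT s - v s)/(2*(n:ℝ)) := by positivity
    rcases le_or_gt 0 (-g) with h | h
    · have : W i * (-g) ≤ -g := by
        calc W i * (-g) ≤ 1 * (-g) := mul_le_mul_of_nonneg_right (hW1 i) h
          _ = -g := one_mul _
      linarith
    · exfalso
      have : W i * (-g) ≤ 0 := mul_nonpos_of_nonneg_of_nonpos (hW0 i) (le_of_lt h)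
      linarith
  · right
    push_neg at hcase
    obtain ⟨k, hk, hkz⟩ := exists_period (M.step π) s
    refine ⟨z, k, hk, hkz, ?_⟩
    have hsum : (∑ i ∈ Finset.range n, W i * M.gain γ vT (π ((M.step π)^[i] s)))
        > -( (vT s - v s)/2 ) := by
      have h1 : ∀ i ∈ Finset.range n,
          -((vT s - v s)/(2*(n:ℝ))) < W i * M.gain γ vT (π ((M.step π)^[i] s)) := by
        intro i hi
        have := hcase i hi
        linarith
      have h2 : (∑ i ∈ Finset.range n, -((vT s - v s)/(2*(n:ℝ))))
          < ∑ i ∈ Finset.range n, W i * M.gain γ vT (π ((M.step π)^[i] s)) :=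
        Finset.sum_lt_sum_of_nonempty (by simp; omega) h1
      have h3 : (∑ i ∈ Finset.range n, -((vT s - v s)/(2*(n:ℝ))))
          = -( (vT s - v s)/2 * ((n:ℝ) / (n:ℝ)) ) := by
        rw [Finset.sum_const, Finset.card_range, nsmul_eq_mul]
        field_simp
      rw [h3] at h2
      rw [div_self (ne_of_gt hnR), mul_one] at h2
      exact h2
    -- telescope: v s - vT s = sum + W n * (v z - vT z)
    have htail : W n * (vT z - v z) > (vT s - v s)/2 := by
      have : v s - vT s = (∑ i ∈ Finset.range n, W i * M.gain γ vT (π ((M.step π)^[i] s)))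
          + W n * (v z - vT z) := htel
      have hflip : W n * (vT z - v z) = (vT s - v s)
          + (∑ i ∈ Finset.range n, W i * M.gain γ vT (π ((M.step π)^[i] s))) := by
        linarith [this]
      rw [hflip]
      linarith [hsum]
    have hWd : W n * (vT z - v z) ≤ vT z - v z := by
      have hd0 : 0 < vT z - v z := by
        by_contra h
        push_neg at h
        have : W n * (vT z - v z) ≤ 0 := mul_nonpos_of_nonneg_of_nonpos (hW0 n) h
        linarith
      calc W n * (vT z - v z) ≤ 1 * (vT z - v z) :=
            mul_le_mul_of_nonneg_right (hW1 n) (le_of_lt hd0)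
        _ = vT z - v z := one_mul _
    linarith

end CaseSplit


end DetMDP


private lemma aux_numeric (n : ℕ) (hn : 2 ≤ n) :
    ∃ k : ℕ, 1 ≤ k ∧
      (∀ j : ℕ, k ≤ j → (1 - 1/(n:ℝ)^2)^j ≤ 1/(2*(n:ℝ)^3)) ∧
      (k:ℝ) ≤ 7*(n:ℝ)^2*Real.log (n:ℝ) := by
  have hnR : (2:ℝ) ≤ (n:ℝ) := by exact_mod_cast hn
  have hn20 : (0:ℝ) < (n:ℝ)^2 := by positivity
  have hn30 : (0:ℝ) < (n:ℝ)^3 := by positivity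
  have hlog2 : (0.6931471803 : ℝ) < Real.log 2 := Real.log_two_gt_d9
  have hlogn : Real.log 2 ≤ Real.log (n:ℝ) := Real.log_le_log (by norm_num) hnR
  set x := Real.log (2*(n:ℝ)^3) with hx
  have hx0 : 0 ≤ x := Real.log_nonneg (by nlinarith)
  refine ⟨n^2 * (⌈x⌉₊ + 1), ?_, ?_, ?_⟩
  · have h0 : 0 < n^2 * (⌈x⌉₊ + 1) :=
      Nat.mul_pos (Nat.pow_pos (by omega)) (Nat.succ_pos _)
    omega
  · intro j hj
    have hbase0 : (0:ℝ) ≤ 1 - 1/(n:ℝ)^2 := by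
      rw [sub_nonneg, div_le_one hn20]; nlinarith
    have hd2 : (1 - 1/(n:ℝ)^2)^j ≤ (1 - 1/(n:ℝ)^2)^(n^2 * (⌈x⌉₊ + 1)) :=
      pow_le_pow_of_le_one hbase0 (by rw [sub_le_self_iff]; positivity) hj
    have hd3 : (1 - 1/(n:ℝ)^2)^(n^2 * (⌈x⌉₊ + 1))
        ≤ (Real.exp (-(1/(n:ℝ)^2)))^(n^2 * (⌈x⌉₊ + 1)) :=
      pow_le_pow_left₀ hbase0 (Real.one_sub_le_exp_neg _) _
    have hd4 : (Real.exp (-(1/(n:ℝ)^2)))^(n^2 * (⌈x⌉₊ + 1))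
        = Real.exp (((n^2 * (⌈x⌉₊ + 1) : ℕ):ℝ) * (-(1/(n:ℝ)^2))) :=
      (Real.exp_nat_mul _ _).symm
    have hd5 : x ≤ ((n^2 * (⌈x⌉₊ + 1) : ℕ):ℝ) / (n:ℝ)^2 := by
      have hceil : x ≤ (⌈x⌉₊ : ℝ) := Nat.le_ceil _
      rw [le_div_iff₀ hn20]
      push_cast
      have h7 : x ≤ (⌈x⌉₊ : ℝ) + 1 := by linarith
      calc x * (n:ℝ)^2 ≤ ((⌈x⌉₊ : ℝ) + 1) * (n:ℝ)^2 :=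
            mul_le_mul_of_nonneg_right h7 (le_of_lt hn20)
        _ = (n:ℝ)^2 * ((⌈x⌉₊:ℝ) + 1) := by ring
    have hd6 : Real.exp (((n^2 * (⌈x⌉₊ + 1) : ℕ):ℝ) * (-(1/(n:ℝ)^2))) ≤ 1/(2*(n:ℝ)^3) := by
      have e1 : ((n^2 * (⌈x⌉₊ + 1) : ℕ):ℝ) * (-(1/(n:ℝ)^2))
          = -(((n^2 * (⌈x⌉₊ + 1) : ℕ):ℝ)/(n:ℝ)^2) := by ring
      rw [e1]
      have hpos : (0:ℝ) < (2*(n:ℝ)^3)⁻¹ := by positivity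
      have h8 : -(((n^2 * (⌈x⌉₊ + 1) : ℕ):ℝ)/(n:ℝ)^2) ≤ Real.log ((2*(n:ℝ)^3)⁻¹) := by
        rw [Real.log_inv, ← hx]
        linarith
      calc Real.exp (-(((n^2 * (⌈x⌉₊ + 1) : ℕ):ℝ)/(n:ℝ)^2))
          ≤ Real.exp (Real.log ((2*(n:ℝ)^3)⁻¹)) := Real.exp_le_exp.2 h8
        _ = (2*(n:ℝ)^3)⁻¹ := Real.exp_log hpos
        _ = 1/(2*(n:ℝ)^3) := by rw [one_div]
    calc (1 - 1/(n:ℝ)^2)^j ≤ _ := hd2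
      _ ≤ _ := hd3
      _ = _ := hd4
      _ ≤ 1/(2*(n:ℝ)^3) := hd6
  · have hxval : x = Real.log 2 + 3 * Real.log (n:ℝ) := by
      rw [hx, Real.log_mul (by norm_num) (by positivity), Real.log_pow]
      push_cast; ring
    have hlogn0 : (0.6931471803:ℝ) ≤ Real.log (n:ℝ) := by linarith
    have hceil2 : (⌈x⌉₊ : ℝ) < x + 1 := Nat.ceil_lt_add_one hx0
    have hxle : x ≤ 4 * Real.log (n:ℝ) := by rw [hxval]; linarith
    have h9 : ((⌈x⌉₊:ℝ) + 1) ≤ 7 * Real.log (n:ℝ) := by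
      have : (2:ℝ) ≤ 3 * Real.log (n:ℝ) := by linarith
      linarith
    push_cast
    calc (n:ℝ)^2 * ((⌈x⌉₊:ℝ) + 1) ≤ (n:ℝ)^2 * (7 * Real.log (n:ℝ)) :=
          mul_le_mul_of_nonneg_left h9 (le_of_lt hn20)
      _ = 7*(n:ℝ)^2*Real.log (n:ℝ) := by ring

open DetMDP in
set_option maxHeartbeats 2000000 in
/-- There is an absolute constant `c` such that in any execution
of the simplex method with the highest-gain pivoting rule on a deterministic MDP
with nonuniform discounts and `n ≥ 2` states, starting from any policy of the
execution, within `c·n²m·log n` iterations either the execution terminates or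
some iteration creates a new cycle. -/
theorem new_cycle_or_terminate_nonuniform :
    ∃ c : ℝ, 0 < c ∧
      ∀ (S A : Type) [Fintype S] [Fintype A] [DecidableEq S] [DecidableEq A]
        (M : DetMDP S A) (γ : A → ℝ), (∀ a : A, 0 ≤ γ a ∧ γ a < 1) →
        2 ≤ Fintype.card S →
        ∀ seq : ℕ → S → A, M.IsExecution γ seq →
        ∀ t0 : ℕ, ∃ t : ℕ, t0 ≤ t ∧
          (t : ℝ) ≤ (t0 : ℝ) + c * (Fintype.card S : ℝ) ^ 2 * (Fintype.card A : ℝ) *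
            Real.log (Fintype.card S : ℝ) ∧
          (M.IsTerminal γ (seq t) ∨ M.NewCycleAt seq t) := by
  classical
  refine ⟨100, by norm_num, ?_⟩
  intro S A _ _ _ _ M γ hγ hS seq hexec t0
  by_contra hcon
  push_neg at hcon
  set n := Fintype.card S with hn
  set m := Fintype.card A with hm
  have hn2 : 2 ≤ n := hS
  have hmn : n ≤ m := Fintype.card_le_of_surjective M.src
    (fun s => M.exists_action s)
  have hm2 : 2 ≤ m := le_trans hn2 hmn
  have hSne : Nonempty S := Fintype.card_pos_iff.1 (by omega)
  have hAne : Nonempty A := Fintype.card_pos_iff.1 (by omega)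
  have hnR : (2:ℝ) ≤ (n:ℝ) := by exact_mod_cast hn2
  have hnR0 : (0:ℝ) < (n:ℝ) := by linarith
  have hlog2 : (0.6931471803 : ℝ) < Real.log 2 := Real.log_two_gt_d9
  have hlogn : Real.log 2 ≤ Real.log (n:ℝ) :=
    Real.log_le_log (by norm_num) hnR
  have hlogn0 : 0 < Real.log (n:ℝ) := by linarith
  set X : ℝ := (n:ℝ)^2 * (m:ℝ) * Real.log (n:ℝ) with hX
  have hmR : (2:ℝ) ≤ (m:ℝ) := by exact_mod_cast hm2
  have hX5 : 5 ≤ X := by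
    have h4 : (4:ℝ) ≤ (n:ℝ)^2 := by nlinarith
    have hl : (0.6931471803:ℝ) ≤ Real.log (n:ℝ) := by linarith
    have s1 : (8:ℝ) ≤ (n:ℝ)^2 * (m:ℝ) := by nlinarith
    have s2 : (8:ℝ) * 0.6931471803 ≤ ((n:ℝ)^2 * (m:ℝ)) * Real.log (n:ℝ) := by
      have := mul_le_mul s1 hl (by norm_num) (by linarith)
      linarith
    rw [hX]; linarith
  have hXpos : 0 < X := by linarith
  set B : ℝ := 100 * (n:ℝ)^2 * (m:ℝ) * Real.log (n:ℝ) with hB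
  have hBX : B = 100 * X := by rw [hB, hX]; ring
  set NB := ⌊B⌋₊ with hNB
  set T := t0 + NB with hT
  -- every time in the window is a pivot with no new cycle
  have hBpos : (0:ℝ) < B := by rw [hBX]; linarith
  have hbad : ∀ t, t0 ≤ t → t ≤ T → ¬ M.IsTerminal γ (seq t) ∧ ¬ M.NewCycleAt seq t := by
    intro t h1 h2
    apply hcon t h1
    have h3 : (t:ℝ) ≤ (t0:ℝ) + (NB:ℝ) := by
      rw [hT] at h2
      exact_mod_cast h2
    have h4 : (NB:ℝ) ≤ B := Nat.floor_le (le_of_lt hBpos)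
    rw [hB] at h4
    linarith
  have hpivot : ∀ t, t0 ≤ t → t ≤ T → M.SimplexPivot γ (seq t) (seq (t+1)) := by
    intro t h1 h2
    rcases hexec.2 t with h | h
    · exact h
    · exact absurd h.1 (hbad t h1 h2).1
  -- choose value vectors and pivot actions
  have hchoice : ∀ t : ℕ, ∃ (v : S → ℝ) (a : A), t0 ≤ t → t ≤ T →
      (M.IsValue γ (seq t) v ∧ 0 < M.gain γ v a ∧ (∀ b, M.gain γ v b ≤ M.gain γ v a) ∧
        seq (t+1) = Function.update (seq t) (M.src a) a) := by
    intro t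
    by_cases h : t0 ≤ t ∧ t ≤ T
    · obtain ⟨v, a, h1, h2, h3, h4⟩ := hpivot t h.1 h.2
      exact ⟨v, a, fun _ _ => ⟨h1, h2, h3, h4⟩⟩
    · exact ⟨fun _ => 0, Classical.arbitrary A, fun ha hb => absurd ⟨ha, hb⟩ h⟩
  choose v act hva using hchoice
  have hpol : ∀ t, M.IsPolicy (seq t) := hexec.1
  -- abbreviations
  set g : ℕ → ℝ := fun t => M.gain γ (v t) (act t) with hg
  set D : ℕ → ℝ := fun t => ∑ s : S, (v T s - v t s) with hD
  obtain ⟨KK, hKK1, hKKdecay, hKKR⟩ := aux_numeric n hn2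
  -- cycles are nested along the window
  have hnest : ∀ t t', t0 ≤ t → t ≤ t' → t' ≤ T →
      ∀ C, M.IsCycleOf (seq t') C → M.IsCycleOf (seq t) C := by
    have hone : ∀ t, t0 ≤ t → t < T → ∀ C, M.IsCycleOf (seq (t+1)) C → M.IsCycleOf (seq t) C := by
      intro t h1 h2 C hC
      by_contra hnc
      exact (hbad t h1 (le_of_lt h2)).2 ⟨C, hC, hnc⟩
    intro t t' h1 hle
    induction t', hle using Nat.le_induction with
    | base => exact fun _ C hC => hC
    | succ t'' ht'' ih =>
      intro h2 C hC
      exact ih (by omega) C (hone t'' (le_trans h1 ht'') (by omega) C hC)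
  -- monotonicity of values
  have hgain0 : ∀ t, t0 ≤ t → t < T → ∀ s, 0 ≤ M.gain γ (v t) (seq (t+1) s) := by
    intro t h1 h2 s
    have hupd := (hva t h1 (le_of_lt h2)).2.2.2
    by_cases hs : s = M.src (act t)
    · rw [hupd, hs, Function.update_self]
      exact le_of_lt (hva t h1 (le_of_lt h2)).2.1
    · rw [hupd, Function.update_of_ne hs]
      rw [gain_policy_eq_zero (hpol t) (hva t h1 (le_of_lt h2)).1 s]
  have hmono1 : ∀ t, t0 ≤ t → t < T → ∀ s,
      v t s + M.gain γ (v t) (seq (t+1) s) ≤ v (t+1) s := by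
    intro t h1 h2 s
    exact improve_ge hγ (hpol t) (hpol (t+1)) (hva t h1 (le_of_lt h2)).1
      (hva (t+1) (by omega) (by omega)).1 (hgain0 t h1 h2) s
  have hstep1 : ∀ t, t0 ≤ t → t < T → ∀ s, v t s ≤ v (t+1) s := by
    intro t h1 h2 s
    have := hmono1 t h1 h2 s
    have h0 := hgain0 t h1 h2 s
    linarith
  have hmono : ∀ t t', t0 ≤ t → t ≤ t' → t' ≤ T → ∀ s, v t s ≤ v t' s := by
    intro t t' h1 hle
    induction t', hle using Nat.le_induction with
    | base => exact fun _ s => le_refl _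
    | succ t'' ht'' ih =>
      intro h2 s
      exact le_trans (ih (by omega) s) (hstep1 t'' (le_trans h1 ht'') (by omega) s)
  have hloc : ∀ t, t0 ≤ t → t < T → v t (M.src (act t)) + g t ≤ v (t+1) (M.src (act t)) := by
    intro t h1 h2
    have := hmono1 t h1 h2 (M.src (act t))
    rw [(hva t h1 (le_of_lt h2)).2.2.2, Function.update_self] at this
    exact this
  -- gap bounds
  have hT0 : t0 ≤ T := by omega
  have hgap : ∀ t, t0 ≤ t → t < T → ∀ s, v T s - v t s ≤ (n:ℝ) * g t := by
    intro t h1 h2 s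
    exact gap_le hγ (hpol t) (hpol T) (hva t h1 (le_of_lt h2)).1
      (hva T hT0 le_rfl).1
      (fun C hC => hnest t T h1 (le_of_lt h2) le_rfl C hC)
      (le_of_lt (hva t h1 (le_of_lt h2)).2.1)
      (hva t h1 (le_of_lt h2)).2.2.1 s
  have hDle : ∀ t, t0 ≤ t → t < T → D t ≤ (n:ℝ)^2 * g t := by
    intro t h1 h2
    rw [hD]
    calc (∑ s : S, (v T s - v t s)) ≤ ∑ _s : S, (n:ℝ) * g t :=
          Finset.sum_le_sum (fun s _ => hgap t h1 h2 s)
      _ = (n:ℝ)^2 * g t := by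
          rw [Finset.sum_const, Finset.card_univ, nsmul_eq_mul, ← hn]
          ring
  have huD : ∀ t, t0 ≤ t → t ≤ T → ∀ s, v T s - v t s ≤ D t := by
    intro t h1 h2 s
    exact Finset.single_le_sum
      (f := fun s => v T s - v t s)
      (fun x _ => sub_nonneg.2 (hmono t T h1 h2 le_rfl x)) (Finset.mem_univ s)
  have hgleD : ∀ t, t0 ≤ t → t < T → g t ≤ D t := by
    intro t h1 h2
    have l1 := hloc t h1 h2
    have l2 := hmono (t+1) T (by omega) (by omega) le_rfl (M.src (act t))
    have l3 := huD t h1 (le_of_lt h2) (M.src (act t))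
    linarith
  have hDpos : ∀ t, t0 ≤ t → t < T → 0 < D t := by
    intro t h1 h2
    exact lt_of_lt_of_le (hva t h1 (le_of_lt h2)).2.1 (hgleD t h1 h2)
  have hDdecay : ∀ t t', t0 ≤ t → t ≤ t' → t' ≤ T →
      D t' ≤ (1 - 1/(n:ℝ)^2)^(t' - t) * D t := by
    have hn20 : (0:ℝ) < (n:ℝ)^2 := by positivity
    have hbase0 : (0:ℝ) ≤ 1 - 1/(n:ℝ)^2 := by
      rw [sub_nonneg, div_le_one hn20]
      nlinarith
    have hstepD : ∀ t, t0 ≤ t → t < T → D (t+1) ≤ (1 - 1/(n:ℝ)^2) * D t := by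
      intro t h1 h2
      have hsum : g t ≤ ∑ s : S, (v (t+1) s - v t s) := by
        have h5 : v (t+1) (M.src (act t)) - v t (M.src (act t))
            ≤ ∑ s : S, (v (t+1) s - v t s) :=
          Finset.single_le_sum
            (f := fun s => v (t+1) s - v t s)
            (fun x _ => sub_nonneg.2 (hstep1 t h1 h2 x)) (Finset.mem_univ (M.src (act t)))
        have := hloc t h1 h2
        linarith
      have hDeq : D (t+1) = D t - ∑ s : S, (v (t+1) s - v t s) := by
        show (∑ s : S, (v T s - v (t+1) s))
            = (∑ s : S, (v T s - v t s)) - ∑ s : S, (v (t+1) s - v t s)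
        rw [← Finset.sum_sub_distrib]
        congr 1
        funext s
        ring
      have hg2 : D t / (n:ℝ)^2 ≤ g t := by
        rw [div_le_iff₀ hn20]
        have := hDle t h1 h2
        linarith
      rw [hDeq]
      have : D t - g t ≤ (1 - 1/(n:ℝ)^2) * D t := by
        have hexp : (1 - 1/(n:ℝ)^2) * D t = D t - D t/(n:ℝ)^2 := by
          field_simp
        rw [hexp]
        linarith
      linarith
    intro t t' h1 hle
    induction t', hle using Nat.le_induction with
    | base => intro _; simp
    | succ t'' ht'' ih =>
      intro h2
      have e1 : t'' + 1 - t = (t'' - t) + 1 := by omega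
      rw [e1, pow_succ]
      calc D (t''+1) ≤ (1 - 1/(n:ℝ)^2) * D t'' := hstepD t'' (by omega) (by omega)
        _ ≤ (1 - 1/(n:ℝ)^2) * ((1 - 1/(n:ℝ)^2)^(t''-t) * D t) :=
            mul_le_mul_of_nonneg_left (ih (by omega)) hbase0
        _ = (1 - 1/(n:ℝ)^2)^(t''-t) * (1 - 1/(n:ℝ)^2) * D t := by ring
  have hDfar : ∀ t t', t0 ≤ t → t ≤ t' → t' ≤ T → KK ≤ t' - t →
      D t' ≤ D t / (2*(n:ℝ)^3) := by
    intro t t' h1 hle h2 hKKle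
    have htlt : t < T := by omega
    have hDt0 : 0 ≤ D t := le_of_lt (hDpos t h1 htlt)
    have hd1 := hDdecay t t' h1 hle h2
    have hd7 := hKKdecay (t' - t) hKKle
    calc D t' ≤ (1 - 1/(n:ℝ)^2)^(t' - t) * D t := hd1
      _ ≤ (1/(2*(n:ℝ)^3)) * D t := mul_le_mul_of_nonneg_right hd7 hDt0
      _ = D t / (2*(n:ℝ)^3) := by ring
  -- the case split
  have hsplit : ∀ t, t0 ≤ t → t < T →
      (∃ b, seq t (M.src b) = b ∧ M.gain γ (v T) b ≤ -(D t/(2*(n:ℝ)^2)))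
      ∨ (∃ z k, k ∈ Finset.Icc 1 n ∧ (M.step (seq t))^[k] z = z ∧
          D t/(2*(n:ℝ)) ≤ v T z - v t z) := by
    intro t h1 h2
    have hSne' : (Finset.univ : Finset S).Nonempty := Finset.univ_nonempty
    have hDt : 0 < D t := hDpos t h1 h2
    have hc : ∑ _s : S, (D t / (n:ℝ)) = D t := by
      rw [Finset.sum_const, Finset.card_univ, ← hn, nsmul_eq_mul]
      field_simp
    have hDsum : D t = ∑ s : S, (v T s - v t s) := rfl
    have h3 : ∑ _s : S, (D t / (n:ℝ)) ≤ ∑ s : S, (v T s - v t s) :=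
      le_of_eq (hc.trans hDsum)
    obtain ⟨sh, -, hsh⟩ := Finset.exists_le_of_sum_le hSne' h3
    have hx : 0 < v T sh - v t sh :=
      lt_of_lt_of_le (div_pos hDt hnR0) hsh
    have hDn : D t ≤ (n:ℝ) * (v T sh - v t sh) := by
      rw [div_le_iff₀ hnR0] at hsh
      linarith
    rcases case_split hγ (hpol t) (hva t h1 (le_of_lt h2)).1 hx with
      ⟨b, hb1, hb2⟩ | ⟨z, k, hk, hkz, hz2⟩
    · left
      refine ⟨b, hb1, ?_⟩
      rw [← hn] at hb2
      have harith : D t/(2*(n:ℝ)^2) ≤ (v T sh - v t sh)/(2*(n:ℝ)) := by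
        rw [div_le_div_iff₀ (by positivity) (by positivity)]
        nlinarith [hDn]
      linarith
    · right
      refine ⟨z, k, by rw [hn]; exact hk, hkz, ?_⟩
      have harith : D t/(2*(n:ℝ)) ≤ (v T sh - v t sh)/2 := by
        rw [div_le_div_iff₀ (by positivity) (by norm_num)]
        nlinarith [hDn]
      linarith
  -- elimination of actions (case A)
  have helim : ∀ t t' b, t0 ≤ t → t ≤ t' → t' ≤ T → KK ≤ t' - t →
      M.gain γ (v T) b ≤ -(D t/(2*(n:ℝ)^2)) → seq t' (M.src b) = b → False := by
    intro t t' b h1 hle h2 hKKle hgb hbpol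
    have h1' : t0 ≤ t' := le_trans h1 hle
    have htltT : t < T := by omega
    have hDt : 0 < D t := hDpos t h1 htltT
    have hual : v T (M.src b) - v t' (M.src b)
        = γ b * (v T (M.tgt b) - v t' (M.tgt b)) - M.gain γ (v T) b := by
      have hv' := (hva t' h1' h2).1 (M.src b)
      rw [hbpol] at hv'
      simp only [DetMDP.gain]
      rw [hv']
      ring
    have hmt' : 0 ≤ v T (M.tgt b) - v t' (M.tgt b) :=
      sub_nonneg.2 (hmono t' T h1' h2 le_rfl _)
    have hprod : 0 ≤ γ b * (v T (M.tgt b) - v t' (M.tgt b)) :=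
      mul_nonneg (hγ b).1 hmt'
    have hlow : D t/(2*(n:ℝ)^2) ≤ v T (M.src b) - v t' (M.src b) := by
      linarith
    have hup : v T (M.src b) - v t' (M.src b) ≤ D t' := huD t' h1' h2 _
    have hfar := hDfar t t' h1 hle h2 hKKle
    have hstrict : D t/(2*(n:ℝ)^3) < D t/(2*(n:ℝ)^2) := by
      apply div_lt_div_of_pos_left hDt (by positivity)
      nlinarith
    linarith
  -- the counting
  set W : Finset ℕ := Finset.Ico t0 T with hW
  set PA : ℕ → Prop := fun t => ∃ b, seq t (M.src b) = b ∧
      M.gain γ (v T) b ≤ -(D t/(2*(n:ℝ)^2)) with hPA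
  set WA := W.filter PA with hWA
  set WB := W.filter (fun t => ¬ PA t) with hWB
  have hcards : WA.card + WB.card = W.card :=
    Finset.card_filter_add_card_filter_not _
  have hWcard : W.card = NB := by
    rw [hW, hT, Nat.card_Ico]; omega
  have hWAcard : WA.card ≤ m * KK := by
    set fb : ℕ → A := fun t => if h : PA t then h.choose else Classical.arbitrary A with hfb
    have hfbspec : ∀ t, PA t → seq t (M.src (fb t)) = fb t ∧
        M.gain γ (v T) (fb t) ≤ -(D t/(2*(n:ℝ)^2)) := by
      intro t h
      have : fb t = h.choose := by rw [hfb]; simp only [dif_pos h]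
      rw [this]
      exact h.choose_spec
    have hmem : ∀ t ∈ WA, fb t ∈ (Finset.univ : Finset A) := fun t _ => Finset.mem_univ _
    rw [Finset.card_eq_sum_card_fiberwise hmem]
    have hfiber : ∀ b ∈ (Finset.univ : Finset A),
        (WA.filter (fun t => fb t = b)).card ≤ KK := by
      intro b _
      set F := WA.filter (fun t => fb t = b) with hF
      rcases F.eq_empty_or_nonempty with hFe | hFne
      · rw [hFe, Finset.card_empty]; exact Nat.zero_le _
      · set t1 := F.min' hFne with ht1
        have ht1F : t1 ∈ F := F.min'_mem hFne
        have hsub : F ⊆ Finset.Ico t1 (t1 + KK) := by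
          intro t2 ht2
          rw [Finset.mem_Ico]
          refine ⟨F.min'_le t2 ht2, ?_⟩
          by_contra hge
          push_neg at hge
          obtain ⟨h1WA, h1b⟩ := Finset.mem_filter.1 ht1F
          obtain ⟨h2WA, h2b⟩ := Finset.mem_filter.1 ht2
          obtain ⟨h1W, h1PA⟩ := Finset.mem_filter.1 h1WA
          obtain ⟨h2W, h2PA⟩ := Finset.mem_filter.1 h2WA
          rw [hW, Finset.mem_Ico] at h1W h2W
          have hs1 := hfbspec t1 h1PA
          have hs2 := hfbspec t2 h2PA
          rw [h1b] at hs1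
          rw [h2b] at hs2
          exact helim t1 t2 b h1W.1 (by omega) (by omega) (by omega) hs1.2 hs2.1
        calc F.card ≤ (Finset.Ico t1 (t1 + KK)).card := Finset.card_le_card hsub
          _ = KK := by rw [Nat.card_Ico]; omega
    calc (∑ b ∈ (Finset.univ : Finset A), (WA.filter (fun t => fb t = b)).card)
        ≤ ∑ _b ∈ (Finset.univ : Finset A), KK := Finset.sum_le_sum hfiber
      _ = m * KK := by rw [Finset.sum_const, Finset.card_univ, ← hm, smul_eq_mul]
  have hWBcard : WB.card ≤ n * KK := by
    have hPB : ∀ t ∈ WB, ∃ z k, k ∈ Finset.Icc 1 n ∧ (M.step (seq t))^[k] z = z ∧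
        D t/(2*(n:ℝ)) ≤ v T z - v t z := by
      intro t ht
      obtain ⟨htW, htnPA⟩ := Finset.mem_filter.1 ht
      rw [hW, Finset.mem_Ico] at htW
      rcases hsplit t htW.1 htW.2 with hA | hB
      · exact absurd hA htnPA
      · exact hB
    have hchz : ∀ t : ℕ, ∃ (z : S) (k : ℕ), t ∈ WB →
        (k ∈ Finset.Icc 1 n ∧ (M.step (seq t))^[k] z = z ∧
          D t/(2*(n:ℝ)) ≤ v T z - v t z) := by
      intro t
      by_cases ht : t ∈ WB
      · obtain ⟨z, k, h1, h2, h3⟩ := hPB t ht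
        exact ⟨z, k, fun _ => ⟨h1, h2, h3⟩⟩
      · exact ⟨Classical.arbitrary S, 0, fun h => absurd h ht⟩
    choose zf kf hzf using hchz
    set fC : ℕ → Finset A := fun t =>
      (Finset.range (Fintype.card S)).image
        (fun i => seq t ((M.step (seq t))^[i] (zf t))) with hfC
    have hCyc : ∀ t ∈ WB, M.IsCycleOf (seq t) (fC t) := by
      intro t ht
      obtain ⟨h1, h2, h3⟩ := hzf t ht
      rw [Finset.mem_Icc] at h1
      exact ⟨zf t, ⟨kf t, Finset.mem_Icc.2 ⟨h1.1, by omega⟩, h2⟩, rfl⟩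
    have hmem : ∀ t ∈ WB, fC t ∈ WB.image fC := fun t ht => Finset.mem_image_of_mem _ ht
    rw [Finset.card_eq_sum_card_fiberwise hmem]
    have hfiber : ∀ C ∈ WB.image fC, (WB.filter (fun t => fC t = C)).card ≤ KK := by
      intro C hCmem
      set F := WB.filter (fun t => fC t = C) with hF
      rcases F.eq_empty_or_nonempty with hFe | hFne
      · rw [hFe, Finset.card_empty]; exact Nat.zero_le _
      obtain ⟨tw, htwF⟩ := hFne
      have hFdata : ∀ t2 ∈ F, t2 ∈ WB ∧ fC t2 = C := fun t2 h => Finset.mem_filter.1 h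
      set EC := (Finset.Icc t0 T).filter (fun σ => ¬ M.IsCycleOf (seq σ) C) with hEC
      have hfreeze : ∀ t2 ∈ F, ∀ σ, t0 ≤ σ → σ ≤ T → M.IsCycleOf (seq σ) C →
          v t2 (zf t2) = v σ (zf t2) := by
        intro t2 ht2 σ hσ1 hσ2 halive
        obtain ⟨ht2WB, ht2C⟩ := hFdata t2 ht2
        obtain ⟨ht2W', -⟩ := Finset.mem_filter.1 ht2WB
        rw [hW, Finset.mem_Ico] at ht2W'
        obtain ⟨hk1, hk2, hk3⟩ := hzf t2 ht2WB
        rw [Finset.mem_Icc] at hk1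
        refine value_eq_at_cycle_witness hγ (hpol t2) (hpol σ)
          (hva t2 ht2W'.1 (le_of_lt ht2W'.2)).1 (hva σ hσ1 hσ2).1 hk1.1 (by omega) hk2 ?_
        have hCeq : ((Finset.range (Fintype.card S)).image
            (fun i => seq t2 ((M.step (seq t2))^[i] (zf t2)))) = C := ht2C
        rw [hCeq]
        exact halive
      have hECne : EC.Nonempty := by
        refine ⟨T, ?_⟩
        rw [hEC, Finset.mem_filter]
        refine ⟨Finset.mem_Icc.2 ⟨hT0, le_rfl⟩, ?_⟩
        intro halive
        obtain ⟨htwWB', -⟩ := hFdata tw htwF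
        obtain ⟨htwW', -⟩ := Finset.mem_filter.1 htwWB'
        rw [hW, Finset.mem_Ico] at htwW'
        have hfz := hfreeze tw htwF T hT0 le_rfl halive
        obtain ⟨-, -, hk3⟩ := hzf tw htwWB'
        have hDtw := hDpos tw htwW'.1 htwW'.2
        have hpos' : 0 < D tw/(2*(n:ℝ)) := by positivity
        rw [hfz] at hk3
        linarith
      set d := EC.min' hECne with hd
      have hdEC : d ∈ EC := EC.min'_mem hECne
      obtain ⟨hdIcc, hdDead⟩ := Finset.mem_filter.1 hdEC
      rw [Finset.mem_Icc] at hdIcc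
      have hsub : F ⊆ Finset.Icc (d - KK) (d - 1) := by
        intro t2 ht2
        obtain ⟨ht2WB, ht2C⟩ := hFdata t2 ht2
        obtain ⟨ht2W', -⟩ := Finset.mem_filter.1 ht2WB
        rw [hW, Finset.mem_Ico] at ht2W'
        obtain ⟨hk1, hk2, hk3⟩ := hzf t2 ht2WB
        have hCyct2 : M.IsCycleOf (seq t2) C := by
          rw [← ht2C]
          exact hCyc t2 ht2WB
        have ht2d : t2 < d := by
          by_contra hge
          push_neg at hge
          exact hdDead (hnest d t2 hdIcc.1 hge (le_of_lt ht2W'.2) C hCyct2)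
        have halive : M.IsCycleOf (seq (d-1)) C := by
          by_contra hdead
          have hmem' : d - 1 ∈ EC := by
            rw [hEC, Finset.mem_filter]
            exact ⟨Finset.mem_Icc.2 ⟨by omega, by omega⟩, hdead⟩
          have := EC.min'_le _ hmem'
          omega
        have hfz := hfreeze t2 ht2 (d-1) (by omega) (by omega) halive
        have hgapd := hgap (d-1) (by omega) (by omega) (zf t2)
        have hgD := hgleD (d-1) (by omega) (by omega)
        have hDd := hDpos t2 ht2W'.1 ht2W'.2
        refine Finset.mem_Icc.2 ⟨?_, by omega⟩
        by_contra hlt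
        push_neg at hlt
        have hfar := hDfar t2 (d-1) ht2W'.1 (by omega) (by omega) (by omega)
        have hchain : D t2/(2*(n:ℝ)) ≤ (n:ℝ) * (D t2 / (2*(n:ℝ)^3)) := by
          rw [hfz] at hk3
          have c2 : (n:ℝ) * g (d-1) ≤ (n:ℝ) * D (d-1) :=
            mul_le_mul_of_nonneg_left hgD (by positivity)
          have c3 : (n:ℝ) * D (d-1) ≤ (n:ℝ) * (D t2/(2*(n:ℝ)^3)) :=
            mul_le_mul_of_nonneg_left hfar (by positivity)
          linarith
        have hstrict2 : (n:ℝ) * (D t2 / (2*(n:ℝ)^3)) < D t2/(2*(n:ℝ)) := by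
          have he : (n:ℝ) * (D t2 / (2*(n:ℝ)^3)) = D t2 / (2*(n:ℝ)^2) := by
            field_simp
          rw [he]
          apply div_lt_div_of_pos_left hDd (by positivity)
          nlinarith
        linarith
      calc F.card ≤ (Finset.Icc (d - KK) (d-1)).card := Finset.card_le_card hsub
        _ ≤ KK := by rw [Nat.card_Icc]; omega
    have himg : (WB.image fC).card ≤ n := by
      set φ : Finset A → S := fun C => if h : ∃ c, c ∈ C then M.src h.choose
        else Classical.arbitrary S with hφ
      have hφspec : ∀ C : Finset A, C.Nonempty → ∃ c ∈ C, M.src c = φ C := by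
        intro C hCne
        have h : ∃ c, c ∈ C := hCne
        have heq : φ C = M.src h.choose := by rw [hφ]; simp only [dif_pos h]
        exact ⟨h.choose, h.choose_spec, heq.symm⟩
      have hrep : ∀ C ∈ WB.image fC, C = (Finset.range (Fintype.card S)).image
          (fun i => seq t0 ((M.step (seq t0))^[i] (φ C))) := by
        intro C hCmem
        obtain ⟨t2, ht2WB, ht2C⟩ := Finset.mem_image.1 hCmem
        obtain ⟨ht2W', -⟩ := Finset.mem_filter.1 ht2WB
        rw [hW, Finset.mem_Ico] at ht2W'
        have hCyc0 : M.IsCycleOf (seq t0) C := by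
          rw [← ht2C]
          exact hnest t0 t2 le_rfl ht2W'.1 (le_of_lt ht2W'.2) _ (hCyc t2 ht2WB)
        have hCne : C.Nonempty := by
          rw [← ht2C, hfC]
          exact (Finset.nonempty_range_iff.2 (by omega)).image _
        exact cycle_eq_orbit_image (hpol t0) hCyc0 (hφspec C hCne)
      have hinj : Set.InjOn φ (WB.image fC) := by
        intro C hC C' hC' hφeq
        rw [hrep C (by exact_mod_cast hC), hrep C' (by exact_mod_cast hC'), hφeq]
      calc (WB.image fC).card = ((WB.image fC).image φ).card :=
            (Finset.card_image_of_injOn hinj).symm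
        _ ≤ Fintype.card S := Finset.card_le_univ _
        _ = n := hn.symm
    calc (∑ C ∈ WB.image fC, (WB.filter (fun t => fC t = C)).card)
        ≤ ∑ _C ∈ WB.image fC, KK := Finset.sum_le_sum hfiber
      _ = (WB.image fC).card * KK := by rw [Finset.sum_const, smul_eq_mul]
      _ ≤ n * KK := Nat.mul_le_mul_right _ himg
  -- final numeric contradiction
  have hNBle : (NB:ℝ) ≤ 14 * X := by
    have hNBnat : NB ≤ m * KK + n * KK := by
      have := hcards
      rw [hWcard] at this
      omega
    have hcast : (NB:ℝ) ≤ (m:ℝ)*(KK:ℝ) + (n:ℝ)*(KK:ℝ) := by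
      exact_mod_cast hNBnat
    have hKK0 : (0:ℝ) ≤ (KK:ℝ) := Nat.cast_nonneg _
    have hmnR : (n:ℝ) ≤ (m:ℝ) := by exact_mod_cast hmn
    have b1 : (m:ℝ)*(KK:ℝ) ≤ (m:ℝ)*(7*(n:ℝ)^2*Real.log (n:ℝ)) :=
      mul_le_mul_of_nonneg_left hKKR (by linarith)
    have b2 : (n:ℝ)*(KK:ℝ) ≤ (m:ℝ)*(KK:ℝ) :=
      mul_le_mul_of_nonneg_right hmnR hKK0
    have e : (m:ℝ)*(7*(n:ℝ)^2*Real.log (n:ℝ)) = 7*X := by rw [hX]; ring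
    linarith
  have hNBge : B - 1 < (NB:ℝ) := Nat.sub_one_lt_floor B
  rw [hBX] at hNBge
  linarith
end

section
/- Suppose an execution of the simplex method with the highest-gain pivoting rule on a deterministic MDP with nonuniform discounts moves from policy π to policy π' by updating the action at state s, and this creates a new cycle C containing s whose discount is dominated by γ_a for some action a in π'. Let π'' be the last policy of the execution in which s lies on a cycle whose discount is dominated by γ_a. Then v^{π''}_s − v^{π'}_s ≤ (1 − 1/n²)·(v^{π''}_s − v^π_s). -/
open Finset

section Aux

open Finset Function

variable {S A : Type} [Fintype S] [Fintype A] [DecidableEq S] [DecidableEq A]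
variable (M : DetMDP S A)

lemma DetMDP.value_unique {γ : A → ℝ} (hγ : ∀ a : A, 0 ≤ γ a ∧ γ a < 1) {π : S → A}
    {v w : S → ℝ} (hv : M.IsValue γ π v) (hw : M.IsValue γ π w) : v = w := by
  by_contra h
  have ⟨s₀, hs₀⟩ : ∃ s₀, v s₀ ≠ w s₀ := by
    by_contra h'
    push_neg at h'
    exact h (funext h')
  obtain ⟨s₁, -, hs₁⟩ := Finset.exists_max_image Finset.univ (fun s => |v s - w s|)
    ⟨s₀, Finset.mem_univ s₀⟩
  have key : |v s₁ - w s₁| = γ (π s₁) * |v (M.tgt (π s₁)) - w (M.tgt (π s₁))| := by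
    have hd : v s₁ - w s₁ = γ (π s₁) * (v (M.tgt (π s₁)) - w (M.tgt (π s₁))) := by
      rw [hv s₁, hw s₁]; ring
    rw [hd, abs_mul, abs_of_nonneg (hγ (π s₁)).1]
  have h1 : |v s₁ - w s₁| ≤ γ (π s₁) * |v s₁ - w s₁| :=
    key.trans_le (mul_le_mul_of_nonneg_left (hs₁ _ (Finset.mem_univ _)) (hγ (π s₁)).1)
  have h2 : 0 < |v s₁ - w s₁| :=
    lt_of_lt_of_le (abs_pos.2 (sub_ne_zero.2 hs₀)) (hs₁ s₀ (Finset.mem_univ _))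
  nlinarith [(hγ (π s₁)).2]

lemma DetMDP.telescope_s15 {γ : A → ℝ} {π : S → A} (hπ : M.IsPolicy π) {v2 : S → ℝ}
    (hv2 : M.IsValue γ π v2) (v1 : S → ℝ) (s : S) (k : ℕ) :
    v2 s - v1 s =
      (∑ i ∈ Finset.range k, (∏ j ∈ Finset.range i, γ (π ((M.step π)^[j] s))) *
        M.gain γ v1 (π ((M.step π)^[i] s))) +
      (∏ j ∈ Finset.range k, γ (π ((M.step π)^[j] s))) *
        (v2 ((M.step π)^[k] s) - v1 ((M.step π)^[k] s)) := by
  induction k with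
  | zero => simp
  | succ k ih =>
    rw [Finset.sum_range_succ, Finset.prod_range_succ, ih]
    have hstep : (M.step π)^[k+1] s = M.tgt (π ((M.step π)^[k] s)) :=
      Function.iterate_succ_apply' _ _ _
    rw [hstep]
    have h2 := hv2 ((M.step π)^[k] s)
    have hsrc := hπ ((M.step π)^[k] s)
    unfold DetMDP.gain
    rw [hsrc, h2]
    ring

lemma iterate_mul_fixed {f : S → S} {x : S} {k : ℕ} (hfix : f^[k] x = x) :
    ∀ q : ℕ, f^[k * q] x = x := by
  intro q
  induction q with
  | zero => simp
  | succ q ih => rw [Nat.mul_succ, Function.iterate_add_apply, hfix, ih]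

lemma iterate_mod_of_fixed {f : S → S} {x : S} {k : ℕ} (hk : 0 < k)
    (hfix : f^[k] x = x) (m : ℕ) : f^[m] x = f^[m % k] x := by
  conv_lhs => rw [← Nat.div_add_mod m k]
  rw [Nat.add_comm, Function.iterate_add_apply, iterate_mul_fixed hfix]

/-- If `C` is a cycle of `π` and `s` lies on it, then the orbit of `s` is
periodic with some period `k ≤ n`, all orbit actions are in `C`, and every
element of `C` appears on the orbit within one period. -/
lemma DetMDP.onCycle {π : S → A} (hπ : M.IsPolicy π) {C : Finset A} {s : S}
    (hC : M.IsCycleOf π C) (hs : π s ∈ C) :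
    ∃ k : ℕ, 1 ≤ k ∧ k ≤ Fintype.card S ∧ (M.step π)^[k] s = s ∧
      (∀ j : ℕ, π ((M.step π)^[j] s) ∈ C) ∧
      (∀ b ∈ C, ∃ j < k, π ((M.step π)^[j] s) = b) := by
  obtain ⟨s₀, ⟨k, hk, hfix⟩, hCeq⟩ := hC
  rw [Finset.mem_Icc] at hk
  have hk0 : 0 < k := hk.1
  -- s is on the orbit of s₀
  rw [hCeq, Finset.mem_image] at hs
  obtain ⟨i₁, -, hi₁⟩ := hs
  have hss : s = (M.step π)^[i₁] s₀ := by
    have h1 := hπ s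
    have h2 := hπ ((M.step π)^[i₁] s₀)
    rw [← h1, ← hi₁, h2]
  -- the orbit of s in terms of the orbit of s₀
  have horb : ∀ m : ℕ, (M.step π)^[m] s = (M.step π)^[(m + i₁) % k] s₀ := by
    intro m
    rw [hss, ← Function.iterate_add_apply, ← iterate_mod_of_fixed hk0 hfix]
  -- s₀ is on the orbit of s
  have hm0 : ∃ m₀ : ℕ, (M.step π)^[m₀] s = s₀ := by
    refine ⟨k * (i₁ + 1) - i₁, ?_⟩
    have hle : i₁ ≤ k * (i₁ + 1) := by nlinarith
    have : (k * (i₁ + 1) - i₁) + i₁ = k * (i₁ + 1) := by omega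
    rw [hss, ← Function.iterate_add_apply, this, iterate_mul_fixed hfix]
  obtain ⟨m₀, hm₀⟩ := hm0
  have hfixs : (M.step π)^[k] s = s := by
    rw [horb k, Nat.add_mod_left, ← iterate_mod_of_fixed hk0 hfix, ← hss]
  refine ⟨k, hk.1, hk.2, hfixs, ?_, ?_⟩
  · intro j
    rw [horb j, hCeq, Finset.mem_image]
    exact ⟨(j + i₁) % k, Finset.mem_range.2 (lt_of_lt_of_le (Nat.mod_lt _ hk0) hk.2), rfl⟩
  · intro b hb
    rw [hCeq, Finset.mem_image] at hb
    obtain ⟨i, -, hi⟩ := hb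
    refine ⟨(i + m₀) % k, Nat.mod_lt _ hk0, ?_⟩
    rw [← iterate_mod_of_fixed hk0 hfixs, Function.iterate_add_apply, hm₀, hi]

lemma one_sub_pow_le {x : ℝ} (hx0 : 0 ≤ x) (hx1 : x ≤ 1) (n : ℕ) :
    1 - x ^ n ≤ n * (1 - x) := by
  have h := geom_sum_mul x n
  have hsum : (∑ i ∈ Finset.range n, x ^ i) ≤ n := by
    calc (∑ i ∈ Finset.range n, x ^ i) ≤ ∑ _i ∈ Finset.range n, (1:ℝ) :=
          Finset.sum_le_sum fun i _ => pow_le_one₀ hx0 hx1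
      _ = n := by simp
  nlinarith [mul_le_mul_of_nonneg_right hsum (by linarith : (0:ℝ) ≤ 1 - x)]

end Aux

/-- Suppose the execution moves from `π = seq t` to
`π' = seq (t+1)` by updating the action at state `s`, creating a new cycle `C`
containing `s` whose discount is dominated by `γ_a`. Let `π'' = seq t''` be the
last policy of the execution in which `s` lies on a cycle dominated by `γ_a`.
Then `v^{π''}_s − v^{π'}_s ≤ (1 − 1/n²)·(v^{π''}_s − v^π_s)`. -/
theorem cycle_value_contraction_nonuniform
    {S A : Type} [Fintype S] [Fintype A] [DecidableEq S] [DecidableEq A]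
    (M : DetMDP S A) (γ : A → ℝ) (hγ : ∀ a : A, 0 ≤ γ a ∧ γ a < 1)
    (seq : ℕ → S → A) (hexec : M.IsExecution γ seq)
    (t t'' : ℕ) (s : S) (a : A) (C : Finset A)
    -- the iteration from `seq t` to `seq (t+1)` updates the action at state `s`
    (hupd : seq (t + 1) = Function.update (seq t) s (seq (t + 1) s))
    (hchange : seq (t + 1) s ≠ seq t s)
    -- and creates the new cycle `C` containing `s`, dominated by `γ_a` with `a` in `seq (t+1)`
    (hCnew : M.IsCycleOf (seq (t + 1)) C) (hCold : ¬ M.IsCycleOf (seq t) C)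
    (hsC : seq (t + 1) s ∈ C) (haC : a ∈ C) (hdom : ∀ b ∈ C, γ a ≤ γ b)
    -- `seq t''` is the last policy of the execution where `s` is on a cycle dominated by `γ_a`
    (hlast : M.OnDomCycle γ (seq t'') s a)
    (hlast' : ∀ u : ℕ, t'' < u → ¬ M.OnDomCycle γ (seq u) s a)
    (v v' v'' : S → ℝ)
    (hv : M.IsValue γ (seq t) v) (hv' : M.IsValue γ (seq (t + 1)) v')
    (hv'' : M.IsValue γ (seq t'') v'') :
    v'' s - v' s ≤ (1 - 1 / (Fintype.card S : ℝ) ^ 2) * (v'' s - v s) := by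
  classical
  have hNpos : 0 < Fintype.card S := Fintype.card_pos_iff.2 ⟨s⟩
  have hN1 : (1:ℝ) ≤ (Fintype.card S : ℝ) := by exact_mod_cast hNpos
  have hπt := hexec.1 t
  have hπt1 := hexec.1 (t+1)
  have hπt'' := hexec.1 t''
  have hga0 : 0 ≤ γ a := (hγ a).1
  have hga1 : γ a < 1 := (hγ a).2
  -- the pivot at time t uses the action b := seq (t+1) s, of maximal positive gain
  obtain ⟨w, b₀, hw, hgain₀, hmax₀, hupd₀⟩ :
      M.SimplexPivot γ (seq t) (seq (t+1)) := by
    rcases hexec.2 t with h | ⟨-, heq⟩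
    · exact h
    · exact absurd (congrFun heq s) hchange
  have hwv : w = v := M.value_unique hγ hw hv
  rw [hwv] at hgain₀ hmax₀
  have hsb : M.src b₀ = s := by
    by_contra hne
    apply hchange
    rw [hupd₀]
    exact Function.update_of_ne (fun h => hne h.symm) _ _
  have hb₀ : b₀ = seq (t+1) s := by
    rw [hupd₀, hsb, Function.update_self]
  set g := M.gain γ v (seq (t+1) s) with hgdef
  have hg : 0 < g := by rw [hgdef, ← hb₀]; exact hgain₀
  have hmax : ∀ c : A, M.gain γ v c ≤ g := by
    intro c; rw [hgdef, ← hb₀]; exact hmax₀ c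
  -- gains of actions of seq t are zero
  have hzero : ∀ u : S, M.gain γ v (seq t u) = 0 := by
    intro u
    unfold DetMDP.gain
    rw [hπt u, ← hv u, sub_self]
  ------------------------------------------------------------------
  -- Lower bound:  g ≤ n (1 - γ a) (v' s - v s)
  ------------------------------------------------------------------
  obtain ⟨k1, hk11, hk1n, hfix1, hmem1, -⟩ := M.onCycle hπt1 hCnew hsC
  have htel1 := M.telescope_s15 hπt1 hv' v s k1
  rw [hfix1] at htel1
  set Y := v' s - v s with hYdef
  set P1 := ∏ j ∈ Finset.range k1, γ (seq (t+1) ((M.step (seq (t+1)))^[j] s)) with hP1def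
  set Sig1 := ∑ i ∈ Finset.range k1,
      (∏ j ∈ Finset.range i, γ (seq (t+1) ((M.step (seq (t+1)))^[j] s))) *
        M.gain γ v (seq (t+1) ((M.step (seq (t+1)))^[i] s)) with hSig1def
  have hEq1 : (1 - P1) * Y = Sig1 := by linear_combination htel1
  have hterm_nonneg : ∀ i ∈ Finset.range k1,
      0 ≤ (∏ j ∈ Finset.range i, γ (seq (t+1) ((M.step (seq (t+1)))^[j] s))) *
        M.gain γ v (seq (t+1) ((M.step (seq (t+1)))^[i] s)) := by
    intro i _
    apply mul_nonneg (Finset.prod_nonneg fun j _ => (hγ _).1)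
    by_cases hi : (M.step (seq (t+1)))^[i] s = s
    · rw [hi]; exact le_of_lt hg
    · have heq := congrFun hupd ((M.step (seq (t+1)))^[i] s)
      rw [heq, Function.update_of_ne hi]
      exact le_of_eq (hzero _).symm
  have hSg : g ≤ Sig1 := by
    have h0 := Finset.single_le_sum hterm_nonneg (Finset.mem_range.2 hk11)
    simpa using h0
  have hP1nonneg : 0 ≤ P1 := Finset.prod_nonneg fun j _ => (hγ _).1
  have hP1le1 : P1 ≤ 1 := Finset.prod_le_one (fun j _ => (hγ _).1) (fun j _ => (hγ _).2.le)
  have hP1ge : γ a ^ Fintype.card S ≤ P1 := by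
    have h1 : γ a ^ k1 ≤ P1 := by
      have hc : γ a ^ k1 = ∏ _j ∈ Finset.range k1, γ a := by
        rw [Finset.prod_const, Finset.card_range]
      rw [hP1def, hc]
      exact Finset.prod_le_prod (fun _ _ => hga0) (fun j _ => hdom _ (hmem1 j))
    calc γ a ^ Fintype.card S ≤ γ a ^ k1 := pow_le_pow_of_le_one hga0 hga1.le hk1n
      _ ≤ P1 := h1
  have hYpos : 0 < Y := by
    by_contra hYn
    push_neg at hYn
    have : (1 - P1) * Y ≤ 0 := mul_nonpos_of_nonneg_of_nonpos (by linarith) hYn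
    linarith
  have hYb : g ≤ (Fintype.card S : ℝ) * (1 - γ a) * Y := by
    have h2 : 1 - P1 ≤ (Fintype.card S : ℝ) * (1 - γ a) := by
      have := one_sub_pow_le hga0 hga1.le (Fintype.card S)
      linarith
    calc g ≤ Sig1 := hSg
      _ = (1 - P1) * Y := hEq1.symm
      _ ≤ (Fintype.card S : ℝ) * (1 - γ a) * Y := mul_le_mul_of_nonneg_right h2 hYpos.le
  ------------------------------------------------------------------
  -- Upper bound:  (1 - γ a) (v'' s - v s) ≤ n g
  ------------------------------------------------------------------
  obtain ⟨C'', hC''c, hsC'', haC'', hdom''⟩ := hlast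
  obtain ⟨k2, hk21, hk2n, hfix2, hmem2, hsurj2⟩ := M.onCycle hπt'' hC''c hsC''
  have htel2 := M.telescope_s15 hπt'' hv'' v s k2
  rw [hfix2] at htel2
  set X := v'' s - v s with hXdef
  set P2 := ∏ j ∈ Finset.range k2, γ (seq t'' ((M.step (seq t''))^[j] s)) with hP2def
  set Sig2 := ∑ i ∈ Finset.range k2,
      (∏ j ∈ Finset.range i, γ (seq t'' ((M.step (seq t''))^[j] s))) *
        M.gain γ v (seq t'' ((M.step (seq t''))^[i] s)) with hSig2def
  have hEq2 : (1 - P2) * X = Sig2 := by linear_combination htel2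
  have hP2le : P2 ≤ γ a := by
    obtain ⟨j₀, hj₀k, hj₀⟩ := hsurj2 a haC''
    have h3 : γ (seq t'' ((M.step (seq t''))^[j₀] s)) *
        (∏ j ∈ (Finset.range k2).erase j₀, γ (seq t'' ((M.step (seq t''))^[j] s)))
          = ∏ j ∈ Finset.range k2, γ (seq t'' ((M.step (seq t''))^[j] s)) :=
      Finset.mul_prod_erase (Finset.range k2) (fun j => γ (seq t'' ((M.step (seq t''))^[j] s)))
        (Finset.mem_range.2 hj₀k)
    rw [← hP2def] at h3
    have h4 : (∏ j ∈ (Finset.range k2).erase j₀, γ (seq t'' ((M.step (seq t''))^[j] s))) ≤ 1 :=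
      Finset.prod_le_one (fun j _ => (hγ _).1) (fun j _ => (hγ _).2.le)
    have h5 : 0 ≤ (∏ j ∈ (Finset.range k2).erase j₀, γ (seq t'' ((M.step (seq t''))^[j] s))) :=
      Finset.prod_nonneg fun j _ => (hγ _).1
    rw [hj₀] at h3
    nlinarith
  have hSig2le : Sig2 ≤ (Fintype.card S : ℝ) * g := by
    have hterm : ∀ i ∈ Finset.range k2,
        (∏ j ∈ Finset.range i, γ (seq t'' ((M.step (seq t''))^[j] s))) *
          M.gain γ v (seq t'' ((M.step (seq t''))^[i] s)) ≤ g := by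
      intro i _
      have hp0 : 0 ≤ (∏ j ∈ Finset.range i, γ (seq t'' ((M.step (seq t''))^[j] s))) :=
        Finset.prod_nonneg fun j _ => (hγ _).1
      have hp1 : (∏ j ∈ Finset.range i, γ (seq t'' ((M.step (seq t''))^[j] s))) ≤ 1 :=
        Finset.prod_le_one (fun j _ => (hγ _).1) (fun j _ => (hγ _).2.le)
      calc (∏ j ∈ Finset.range i, γ (seq t'' ((M.step (seq t''))^[j] s))) *
            M.gain γ v (seq t'' ((M.step (seq t''))^[i] s))
          ≤ (∏ j ∈ Finset.range i, γ (seq t'' ((M.step (seq t''))^[j] s))) * g :=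
            mul_le_mul_of_nonneg_left (hmax _) hp0
        _ ≤ 1 * g := mul_le_mul_of_nonneg_right hp1 hg.le
        _ = g := one_mul g
    calc Sig2 ≤ ∑ _i ∈ Finset.range k2, g := Finset.sum_le_sum hterm
      _ = (k2 : ℝ) * g := by rw [Finset.sum_const, Finset.card_range, nsmul_eq_mul]
      _ ≤ (Fintype.card S : ℝ) * g :=
          mul_le_mul_of_nonneg_right (by exact_mod_cast hk2n) hg.le
  ------------------------------------------------------------------
  -- Combine
  ------------------------------------------------------------------
  have hfin : X ≤ (Fintype.card S : ℝ) ^ 2 * Y := by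
    rcases le_or_gt X 0 with hX | hX
    · nlinarith
    · have hXb : (1 - γ a) * X ≤ (Fintype.card S : ℝ) * g := by
        calc (1 - γ a) * X ≤ (1 - P2) * X :=
              mul_le_mul_of_nonneg_right (by linarith) hX.le
          _ = Sig2 := hEq2
          _ ≤ (Fintype.card S : ℝ) * g := hSig2le
      nlinarith [mul_le_mul_of_nonneg_left hYb (by linarith : (0:ℝ) ≤ (Fintype.card S : ℝ))]
  have hn2 : (0:ℝ) < (Fintype.card S : ℝ) ^ 2 := by positivity
  have hdiv : X / (Fintype.card S : ℝ) ^ 2 ≤ Y := by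
    rw [div_le_iff₀ hn2]
    nlinarith
  calc v'' s - v' s = X - Y := by rw [hXdef, hYdef]; ring
    _ ≤ X - X / (Fintype.card S : ℝ) ^ 2 := by linarith
    _ = (1 - 1 / (Fintype.card S : ℝ) ^ 2) * X := by ring
end
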